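/- arXiv:1105.6065 — 4 statements merged into one kernel-verified Lean document; each statement's English description precedes it below -/
import Mathlib

section
/- Let T be an ℕ-valued random variable with P(T=0)=ρ and P(T=t)=(1-ρ)p(1-p)^{t-1} for t≥1, where 0<p<1 and 0≤ρ<1. Let n≥1 be an integer and K=⌈T/n⌉. Let K̃ be an ℕ-valued random variable with E[K̃]<∞ such that T and K̃ are conditionally independent given K. Let (D_b)_{b≥0} be identically distributed, nonnegative, integrable random variables with common mean d, with the family (D_b)_{b≥0} independent of the pair (T,K̃). Let l = n - 1/p + n(1-p)^n/(1-(1-p)^n). Then E[(nK̃ + D_{K̃} - T)·1{nK̃ ≥ T}] = (d + l)·P(nK̃ ≥ T) - ρ·l + n·E[max(K̃-K,0)]. -/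
open MeasureTheory ProbabilityTheory
open scoped ENNReal NNReal

lemma tsum_meas_toReal {Ω ι : Type*} [MeasurableSpace Ω] [Countable ι] (P : Measure Ω)
    [IsFiniteMeasure P] (f : ι → Set Ω) (hm : ∀ i, MeasurableSet (f i))
    (hd : Pairwise (Function.onFun Disjoint f)) :
    Summable (fun i => (P (f i)).toReal) ∧
      ∑' i, (P (f i)).toReal = (P (⋃ i, f i)).toReal := by
  have hU := measure_iUnion (μ := P) hd hm
  constructor
  · apply ENNReal.summable_toReal; rw [← hU]; exact measure_ne_top P _
  · rw [← ENNReal.tsum_toReal_eq (fun i => measure_ne_top P _), hU]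

lemma alg_geom (p : ℝ) (hp0 : 0 < p) (hp1 : p < 1) (n : ℕ) :
    ∑ j ∈ Finset.range n, p * (1 - p) ^ j = 1 - (1 - p) ^ n := by
  rw [← Finset.mul_sum, geom_sum_eq (by nlinarith) n, mul_div_assoc']
  rw [div_eq_iff (by nlinarith : (1:ℝ) - p - 1 ≠ 0)]
  ring

lemma alg_main (p : ℝ) (hp0 : 0 < p) (hp1 : p < 1) : ∀ n : ℕ,
    ∑ j ∈ Finset.range n, ((n : ℝ) - 1 - j) * (p * (1 - p) ^ j)
      = ((n : ℝ) - 1 / p) * (1 - (1 - p) ^ n) + n * (1 - p) ^ n := by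
  intro n
  induction n with
  | zero => simp
  | succ n ih =>
    have h1 : ∑ j ∈ Finset.range (n+1), (((n+1 : ℕ) : ℝ) - 1 - j) * (p * (1-p)^j)
        = (∑ j ∈ Finset.range (n+1), ((n:ℝ) - 1 - j) * (p * (1-p)^j))
          + ∑ j ∈ Finset.range (n+1), p * (1-p)^j := by
      rw [← Finset.sum_add_distrib]
      apply Finset.sum_congr rfl
      intro j _
      push_cast
      ring
    rw [h1, Finset.sum_range_succ, ih, alg_geom p hp0 hp1 (n+1)]
    have hp : p ≠ 0 := ne_of_gt hp0
    push_cast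
    field_simp
    ring

/-- Theorem 1 (detection-delay decoupling identity). The change time `T` has an atom
`ρ` at `0` and a geometric `(p)` distribution on `{1,2,...}`; samples are taken every
`n` slots so the change is first observable at batch `K = ⌈T/n⌉`; `K'` (the paper's
`K̃`) is the batch index at which the detector stops, conditionally independent of
`T` given `K`; `D_b` is the network delay of batch `b`, identically distributed with
mean `d`, the family `(D_b)` being independent of `(T, K')`. Then
`E[(nK' + D_{K'} - T) · 1{nK' ≥ T}]
   = (d + l) · P(nK' ≥ T) - ρ · l + n · E[max(K' - K, 0)]`
with `l = n - 1/p + n (1-p)^n / (1 - (1-p)^n)`. -/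
theorem detection_delay_decoupling
    {Ω : Type*} [MeasurableSpace Ω] (P : Measure Ω) [IsProbabilityMeasure P]
    (p ρ : ℝ) (hp0 : 0 < p) (hp1 : p < 1) (hρ0 : 0 ≤ ρ) (hρ1 : ρ < 1)
    (T : Ω → ℕ) (hT : Measurable T)
    (hT0 : (P {ω | T ω = 0}).toReal = ρ)
    (hTdist : ∀ t : ℕ, 1 ≤ t →
      (P {ω | T ω = t}).toReal = (1 - ρ) * p * (1 - p) ^ (t - 1))
    (n : ℕ) (hn : 1 ≤ n)
    (K : Ω → ℕ) (hK : ∀ ω, K ω = (T ω + n - 1) / n)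
    (K' : Ω → ℕ) (hK' : Measurable K')
    (hK'int : Integrable (fun ω => (K' ω : ℝ)) P)
    (hcondind : ∀ t b k : ℕ,
      (P {ω | T ω = t ∧ K' ω = b ∧ K ω = k}).toReal * (P {ω | K ω = k}).toReal
        = (P {ω | T ω = t ∧ K ω = k}).toReal
            * (P {ω | K' ω = b ∧ K ω = k}).toReal)
    (D : ℕ → Ω → ℝ) (hDmeas : ∀ b, Measurable (D b))
    (hDnonneg : ∀ b ω, 0 ≤ D b ω)
    (hDint : ∀ b, Integrable (D b) P)
    (hDident : ∀ b b' : ℕ, Measure.map (D b) P = Measure.map (D b') P)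
    (d : ℝ) (hDmean : ∀ b, ∫ ω, D b ω ∂P = d)
    (hDind : IndepFun (fun ω => fun b => D b ω) (fun ω => (T ω, K' ω)) P)
    (l : ℝ)
    (hl : l = (n : ℝ) - 1 / p + (n : ℝ) * (1 - p) ^ n / (1 - (1 - p) ^ n)) :
    ∫ ω, (if T ω ≤ n * K' ω
            then ((n * K' ω : ℕ) : ℝ) + D (K' ω) ω - (T ω : ℝ) else 0) ∂P
      = (d + l) * (P {ω | T ω ≤ n * K' ω}).toReal - ρ * l
          + (n : ℝ) * ∫ ω, max ((K' ω : ℝ) - (K ω : ℝ)) 0 ∂P := by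
  -- basics
  have hn0 : 0 < n := hn
  haveI : NeZero n := ⟨by omega⟩
  have hq0 : (0:ℝ) < 1 - p := by linarith
  have hq1 : 1 - p < 1 := by linarith
  have hqpow : ∀ m : ℕ, (0:ℝ) < (1 - p) ^ m := fun m => pow_pos hq0 m
  have hqn1 : (1 - p) ^ n < 1 := pow_lt_one₀ (le_of_lt hq0) hq1 (by omega)
  have h1qn : (0:ℝ) < 1 - (1 - p) ^ n := by linarith
  have hρ1' : (0:ℝ) < 1 - ρ := by linarith
  -- the ceiling function
  set kt : ℕ → ℕ := fun t => (t + n - 1) / n with hktdef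
  have hKf : ∀ ω, K ω = kt (T ω) := fun ω => hK ω
  have hdiv : ∀ t b : ℕ, t ≤ n * b ↔ kt t ≤ b := by
    intro t b
    have h2 : (t + n - 1) / n < b + 1 ↔ t + n - 1 < (b+1) * n := Nat.div_lt_iff_lt_mul hn0
    have h3 : (b+1) * n = n * b + n := by ring
    rw [h3] at h2
    have h4 : ((t + n - 1)/n ≤ b) ↔ ((t + n - 1)/n < b + 1) := Nat.lt_succ_iff.symm
    show t ≤ n * b ↔ (t + n - 1) / n ≤ b
    rw [h4, h2]
    generalize n * b = m
    omega
  have hktmul : ∀ t, t ≤ n * kt t := fun t => (hdiv t (kt t)).mpr le_rfl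
  have hktub : ∀ t, n * kt t ≤ t + n := by
    intro t
    show n * ((t + n - 1)/n) ≤ t + n
    calc n * ((t + n - 1)/n) = ((t + n - 1)/n) * n := mul_comm _ _
      _ ≤ t + n - 1 := Nat.div_mul_le_self _ _
      _ ≤ t + n := by omega
  have hkt0 : kt 0 = 0 := by
    show (0 + n - 1)/n = 0
    exact Nat.div_eq_of_lt (by omega)
  have hktblock : ∀ k j : ℕ, j < n → kt (k * n + j + 1) = k + 1 := by
    intro k j hj
    show (k * n + j + 1 + n - 1) / n = k + 1
    have h1 : k * n + j + 1 + n - 1 = (j + n) + k * n := by omega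
    rw [h1, Nat.add_mul_div_right _ _ hn0,
      Nat.div_eq_of_lt_le (show 1 * n ≤ j + n by omega) (show j + n < (1+1)*n by omega)]
    omega
  have hktrange : ∀ t k : ℕ, kt t = k + 1 ↔ (n*k + 1 ≤ t ∧ t ≤ n*(k+1)) := by
    intro t k
    have h1 := hdiv t (k+1)
    have h2 := hdiv t k
    constructor
    · intro h
      constructor
      · by_contra hc
        have ht2 : t ≤ n*k := by omega
        have := h2.mp ht2
        omega
      · exact h1.mpr (le_of_eq h)
    · rintro ⟨ha, hb⟩
      have hu : kt t ≤ k+1 := h1.mp hb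
      have hl2 : ¬ kt t ≤ k := fun hc => by have := h2.mpr hc; omega
      omega
  -- measurability of basic objects
  have hTm : ∀ t : ℕ, MeasurableSet {ω | T ω = t} := fun t => hT (measurableSet_singleton t)
  have hKm : Measurable K := by
    have h : K = (fun t => kt t) ∘ T := funext hKf
    rw [h]; exact (measurable_of_countable _).comp hT
  have hTK'm : MeasurableSet {ω | T ω ≤ n * K' ω} := by
    have h : {ω | T ω ≤ n * K' ω} = (fun ω => (T ω, K' ω)) ⁻¹' {x : ℕ × ℕ | x.1 ≤ n * x.2} := rfl
    rw [h]
    exact (hT.prodMk hK') ((Set.to_countable _).measurableSet)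
  have hcastm : Measurable (fun m : ℕ => (m : ℝ)) := measurable_of_countable _
  -- the sets B t and quantities W, pr, m, V
  set B : ℕ → Set Ω := fun t => {ω | T ω = t ∧ kt t ≤ K' ω} with hBdef
  have hBm : ∀ t, MeasurableSet (B t) := fun t => (hTm t).inter (hK' measurableSet_Ici)
  have hBd : Pairwise (Function.onFun Disjoint B) := by
    intro s t hst
    simp only [Function.onFun, Set.disjoint_left]
    intro ω h1 h2
    exact hst (h1.1.symm.trans h2.1)
  have hBU : ⋃ t, B t = {ω | T ω ≤ n * K' ω} := by
    ext ω
    simp only [Set.mem_iUnion, hBdef, Set.mem_setOf_eq]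
    constructor
    · rintro ⟨t, rfl, h⟩; exact (hdiv _ _).mpr h
    · intro h; exact ⟨T ω, rfl, (hdiv _ _).mp h⟩
  obtain ⟨hWsum, hWtsum⟩ := tsum_meas_toReal P B hBm hBd
  rw [hBU] at hWtsum
  set W : ℕ → ℝ := fun t => (P (B t)).toReal with hWdef
  set Q : ℝ := (P {ω | T ω ≤ n * K' ω}).toReal with hQdef
  set pr : ℕ → ℝ := fun t => (P {ω | T ω = t}).toReal with hprdef
  set m : ℕ → ℝ := fun k => (P {ω | K ω = k}).toReal with hmdef
  set V : ℕ → ℝ := fun k => (P {ω | k ≤ K' ω ∧ K ω = k}).toReal with hVdef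
  set c : ℕ → ℝ := fun t => ((n * kt t : ℕ) : ℝ) - (t : ℝ) with hcdef
  have hWnn : ∀ t, 0 ≤ W t := fun t => ENNReal.toReal_nonneg
  have hW0 : W 0 = ρ := by
    have hB0 : B 0 = {ω | T ω = 0} := by
      ext ω
      simp [hBdef, hkt0]
    rw [hWdef]
    simp only
    rw [hB0]
    exact hT0
  -- conditional independence step
  have hcond : ∀ t : ℕ, W t * m (kt t) = pr t * V (kt t) := by
    intro t
    have e1 : ∀ b : ℕ, {ω | T ω = t ∧ K' ω = b ∧ K ω = kt t} = {ω | T ω = t ∧ K' ω = b} := by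
      intro b
      ext ω
      simp only [Set.mem_setOf_eq]
      constructor
      · rintro ⟨h1, h2, _⟩; exact ⟨h1, h2⟩
      · rintro ⟨h1, h2⟩; exact ⟨h1, h2, by rw [hKf ω, h1]⟩
    have e2 : {ω | T ω = t ∧ K ω = kt t} = {ω | T ω = t} := by
      ext ω
      simp only [Set.mem_setOf_eq]
      exact ⟨fun h => h.1, fun h => ⟨h, by rw [hKf ω, h]⟩⟩
    have hc : ∀ b : ℕ, (P {ω | T ω = t ∧ K' ω = b}).toReal * (P {ω | K ω = kt t}).toReal
        = (P {ω | T ω = t}).toReal * (P {ω | K' ω = b ∧ K ω = kt t}).toReal := by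
      intro b
      have h := hcondind t b (kt t)
      rw [e1 b, e2] at h
      exact h
    -- decompose W t over the values of K'
    have hCm : ∀ b : ℕ, MeasurableSet {ω | T ω = t ∧ K' ω = b ∧ kt t ≤ b} := by
      intro b
      by_cases hb : kt t ≤ b
      · have h : {ω | T ω = t ∧ K' ω = b ∧ kt t ≤ b} = {ω | T ω = t} ∩ {ω | K' ω = b} := by
          ext ω; simp [hb]
        rw [h]; exact (hTm t).inter (hK' (measurableSet_singleton b))
      · have h : {ω | T ω = t ∧ K' ω = b ∧ kt t ≤ b} = ∅ := by
          ext ω; simp [hb]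
        rw [h]; exact MeasurableSet.empty
    have hC'm : ∀ b : ℕ, MeasurableSet {ω | K' ω = b ∧ K ω = kt t ∧ kt t ≤ b} := by
      intro b
      by_cases hb : kt t ≤ b
      · have h : {ω | K' ω = b ∧ K ω = kt t ∧ kt t ≤ b}
            = {ω | K' ω = b} ∩ {ω | K ω = kt t} := by
          ext ω; simp [hb]
        rw [h]; exact (hK' (measurableSet_singleton b)).inter (hKm (measurableSet_singleton _))
      · have h : {ω | K' ω = b ∧ K ω = kt t ∧ kt t ≤ b} = ∅ := by
          ext ω; simp [hb]
        rw [h]; exact MeasurableSet.empty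
    have hCd : Pairwise (Function.onFun Disjoint
        (fun b => {ω | T ω = t ∧ K' ω = b ∧ kt t ≤ b})) := by
      intro a b hab
      simp only [Function.onFun, Set.disjoint_left]
      intro ω h1 h2
      exact hab (h1.2.1.symm.trans h2.2.1)
    have hC'd : Pairwise (Function.onFun Disjoint
        (fun b => {ω | K' ω = b ∧ K ω = kt t ∧ kt t ≤ b})) := by
      intro a b hab
      simp only [Function.onFun, Set.disjoint_left]
      intro ω h1 h2
      exact hab (h1.1.symm.trans h2.1)
    obtain ⟨hs1, ht1⟩ := tsum_meas_toReal P _ hCm hCd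
    obtain ⟨hs2, ht2⟩ := tsum_meas_toReal P _ hC'm hC'd
    have hU1 : ⋃ b, {ω | T ω = t ∧ K' ω = b ∧ kt t ≤ b} = B t := by
      ext ω
      simp only [Set.mem_iUnion, hBdef, Set.mem_setOf_eq]
      constructor
      · rintro ⟨b, h1, h2, h3⟩; exact ⟨h1, h2 ▸ h3⟩
      · rintro ⟨h1, h2⟩; exact ⟨K' ω, h1, rfl, h2⟩
    have hU2 : ⋃ b, {ω | K' ω = b ∧ K ω = kt t ∧ kt t ≤ b} = {ω | kt t ≤ K' ω ∧ K ω = kt t} := by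
      ext ω
      simp only [Set.mem_iUnion, Set.mem_setOf_eq]
      constructor
      · rintro ⟨b, h1, h2, h3⟩; exact ⟨h1 ▸ h3, h2⟩
      · rintro ⟨h1, h2⟩; exact ⟨K' ω, rfl, h2, h1⟩
    rw [hU1] at ht1
    rw [hU2] at ht2
    have hv1 : ∀ b : ℕ, (P {ω | T ω = t ∧ K' ω = b ∧ kt t ≤ b}).toReal
        = if kt t ≤ b then (P {ω | T ω = t ∧ K' ω = b}).toReal else 0 := by
      intro b
      by_cases hb : kt t ≤ b
      · rw [if_pos hb]
        have h : {ω | T ω = t ∧ K' ω = b ∧ kt t ≤ b} = {ω | T ω = t ∧ K' ω = b} := by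
          ext ω; simp [hb]
        rw [h]
      · rw [if_neg hb]
        have h : {ω | T ω = t ∧ K' ω = b ∧ kt t ≤ b} = ∅ := by ext ω; simp [hb]
        rw [h]; simp
    have hv2 : ∀ b : ℕ, (P {ω | K' ω = b ∧ K ω = kt t ∧ kt t ≤ b}).toReal
        = if kt t ≤ b then (P {ω | K' ω = b ∧ K ω = kt t}).toReal else 0 := by
      intro b
      by_cases hb : kt t ≤ b
      · rw [if_pos hb]
        have h : {ω | K' ω = b ∧ K ω = kt t ∧ kt t ≤ b} = {ω | K' ω = b ∧ K ω = kt t} := by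
          ext ω; simp [hb]
        rw [h]
      · rw [if_neg hb]
        have h : {ω | K' ω = b ∧ K ω = kt t ∧ kt t ≤ b} = ∅ := by ext ω; simp [hb]
        rw [h]; simp
    simp only [hWdef, hmdef, hprdef, hVdef]
    rw [← ht1, ← ht2, ← hs1.tsum_mul_right, ← Summable.tsum_mul_left _ hs2]
    apply tsum_congr
    intro b
    rw [hv1 b, hv2 b]
    split_ifs with hb
    · exact hc b
    · simp
  -- positivity of the masses
  have hprval : ∀ t : ℕ, pr (t+1) = (1-ρ) * p * (1-p)^t := by
    intro t
    simp only [hprdef]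
    rw [hTdist (t+1) (by omega)]
    simp
  have hmkpos : ∀ t : ℕ, 1 ≤ t → 0 < m (kt t) := by
    intro t ht
    have hsub : {ω | T ω = t} ⊆ {ω | K ω = kt t} := by
      intro ω h
      simp only [Set.mem_setOf_eq] at h ⊢
      rw [hKf ω, h]
    have hle : pr t ≤ m (kt t) := by
      simp only [hprdef, hmdef]
      exact ENNReal.toReal_le_toReal (measure_ne_top P _) (measure_ne_top P _)
        |>.mpr (measure_mono hsub)
    have hpos : 0 < pr t := by
      obtain ⟨s, rfl⟩ := Nat.exists_eq_add_of_le ht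
      rw [show 1 + s = s + 1 by omega, hprval s]
      positivity
    linarith
  -- value of the masses m (k+1)
  have hprsum : ∀ k : ℕ, ∑ j ∈ Finset.range n, pr (k*n + j + 1)
      = (1-ρ) * (1-p)^(k*n) * (1-(1-p)^n) := by
    intro k
    have h1 : ∀ j ∈ Finset.range n, pr (k*n+j+1) = ((1-ρ) * (1-p)^(k*n)) * (p * (1-p)^j) := by
      intro j hj
      rw [show k*n+j+1 = (k*n+j)+1 by omega, hprval (k*n+j), pow_add]
      ring
    rw [Finset.sum_congr rfl h1, ← Finset.mul_sum, alg_geom p hp0 hp1 n]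
  have hms : ∀ k : ℕ, m (k+1) = ∑ j ∈ Finset.range n, pr (k*n+j+1) := by
    intro k
    have hmc : n*k = k*n := Nat.mul_comm n k
    have hms' : n*(k+1) = n*k + n := by ring
    have hset : {ω | K ω = k+1} = ⋃ j ∈ Finset.range n, {ω | T ω = k*n+j+1} := by
      ext ω
      simp only [Set.mem_setOf_eq, Set.mem_iUnion, Finset.mem_range, exists_prop]
      rw [hKf ω, hktrange (T ω) k]
      constructor
      · rintro ⟨h1, h2⟩
        exact ⟨T ω - (k*n+1), by omega, by omega⟩
      · rintro ⟨j, hj, hTj⟩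
        constructor <;> omega
    have hdisj : (↑(Finset.range n) : Set ℕ).PairwiseDisjoint
        (fun j => {ω | T ω = k*n+j+1}) := by
      intro i _ j _ hij
      simp only [Function.onFun, Set.disjoint_left]
      intro ω h1 h2
      simp only [Set.mem_setOf_eq] at h1 h2
      exact hij (by omega)
    simp only [hmdef, hprdef]
    rw [hset, measure_biUnion_finset hdisj (fun j _ => hTm _),
      ENNReal.toReal_sum (fun j _ => measure_ne_top P _)]
  have hmval : ∀ k : ℕ, m (k+1) = (1-ρ) * (1-p)^(k*n) * (1-(1-p)^n) := by
    intro k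
    rw [hms k, hprsum k]
  have hmpos' : ∀ k : ℕ, 0 < m (k+1) := by
    intro k
    rw [hmval k]
    have := hqpow (k*n)
    positivity
  -- the value of l
  have hlval : l * (1 - (1-p)^n) = ((n:ℝ) - 1/p) * (1 - (1-p)^n) + n * (1-p)^n := by
    rw [hl]
    field_simp
  -- block sums
  have hWblock : ∀ k : ℕ, ∀ j, j < n →
      W (k*n + j + 1) = pr (k*n+j+1) * (V (k+1) / m (k+1)) := by
    intro k j hj
    have h := hcond (k*n+j+1)
    rw [hktblock k j hj] at h
    have hm := (hmpos' k).ne'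
    field_simp
    linear_combination h
  have hblockQ : ∀ k : ℕ, ∑ j ∈ Finset.range n, W (k*n + j + 1) = V (k+1) := by
    intro k
    have h1 : ∀ j ∈ Finset.range n, W (k*n+j+1) = pr (k*n+j+1) * (V (k+1) / m (k+1)) :=
      fun j hj => hWblock k j (Finset.mem_range.mp hj)
    rw [Finset.sum_congr rfl h1, ← Finset.sum_mul, hprsum k, ← hmval k,
      mul_div_cancel₀ _ (hmpos' k).ne']
  have hblockS : ∀ k : ℕ, ∑ j ∈ Finset.range n, c (k*n+j+1) * W (k*n+j+1) = l * V (k+1) := by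
    intro k
    have hcval : ∀ j, j < n → c (k*n+j+1) = (n:ℝ) - 1 - j := by
      intro j hj
      simp only [hcdef]
      rw [hktblock k j hj]
      push_cast
      ring
    have h1 : ∀ j ∈ Finset.range n, c (k*n+j+1) * W (k*n+j+1)
        = (((1-ρ) * (1-p)^(k*n)) * (((n:ℝ) - 1 - j) * (p * (1-p)^j))) * (V (k+1) / m (k+1)) := by
      intro j hj
      have hj' := Finset.mem_range.mp hj
      rw [hcval j hj', hWblock k j hj',
        show k*n+j+1 = (k*n+j)+1 by omega, hprval (k*n+j), pow_add]
      ring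
    rw [Finset.sum_congr rfl h1, ← Finset.sum_mul, ← Finset.mul_sum,
      alg_main p hp0 hp1 n, ← hlval, hmval k]
    field_simp
  -- reindexing lemma
  have hsymm : ∀ x : ℕ × Fin n, (Nat.divModEquiv n).symm x = x.1 * n + (x.2:ℕ) := by
    intro x
    simp [Nat.divModEquiv]
  have hreindex : ∀ g : ℕ → ℝ, Summable g →
      ∑' t, g t = g 0 + ∑' k : ℕ, ∑ j ∈ Finset.range n, g (k*n + j + 1) := by
    intro g hg
    rw [hg.tsum_eq_zero_add]
    congr 1
    have hsucc : Summable (fun a => g (a+1)) :=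
      hg.comp_injective (add_left_injective 1)
    have hsum2 : Summable (fun x : ℕ × Fin n => g ((Nat.divModEquiv n).symm x + 1)) :=
      hsucc.comp_injective (Equiv.injective _)
    rw [← Equiv.tsum_eq ((Nat.divModEquiv n).symm) (fun a => g (a+1)),
      hsum2.tsum_prod' hsum2.prod_factor]
    apply tsum_congr
    intro k
    rw [tsum_fintype]
    rw [show (fun j : Fin n => g ((Nat.divModEquiv n).symm (k, j) + 1))
        = fun j : Fin n => g (k * n + (j:ℕ) + 1) from funext fun j => by rw [hsymm (k, j)]]
    exact Fin.sum_univ_eq_sum_range (fun j => g (k*n + j + 1)) n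
  -- bounds on c
  have hc0 : ∀ t, 0 ≤ c t := by
    intro t
    simp only [hcdef]
    have := Nat.cast_le (α := ℝ) |>.mpr (hktmul t)
    linarith
  have hcn : ∀ t, c t ≤ n := by
    intro t
    simp only [hcdef]
    have h := Nat.cast_le (α := ℝ) |>.mpr (hktub t)
    push_cast at h ⊢
    linarith
  have hc00 : c 0 = 0 := by
    simp only [hcdef, hkt0]
    simp
  -- the discrete core identity
  have hFs : Summable (fun t => c t * W t) :=
    Summable.of_nonneg_of_le (fun t => mul_nonneg (hc0 t) (hWnn t))
      (fun t => mul_le_mul_of_nonneg_right (hcn t) (hWnn t)) (hWsum.mul_left (n:ℝ))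
  have hQ2 : Q = ρ + ∑' k : ℕ, V (k+1) := by
    rw [← hWtsum, hreindex W hWsum, hW0]
    congr 1
    exact tsum_congr fun k => hblockQ k
  have hSval : ∑' t, c t * W t = l * (Q - ρ) := by
    rw [hreindex (fun t => c t * W t) hFs, hc00, zero_mul, zero_add]
    have h1 : ∀ k : ℕ, ∑ j ∈ Finset.range n, c (k*n+j+1) * W (k*n+j+1) = l * V (k+1) :=
      hblockS
    rw [tsum_congr h1, tsum_mul_left, hQ2]
    ring
  -- integrand decomposition
  set g2 : Ω → ℝ := fun ω => if T ω ≤ n * K' ω then ((n * K ω : ℕ) : ℝ) - (T ω : ℝ) else 0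
    with hg2def
  set gD : Ω → ℝ := fun ω => if T ω ≤ n * K' ω then D (K' ω) ω else 0 with hgDdef
  have hsplit : ∀ ω, (if T ω ≤ n * K' ω
      then ((n * K' ω : ℕ) : ℝ) + D (K' ω) ω - (T ω : ℝ) else 0)
      = g2 ω + (n:ℝ) * max ((K' ω:ℝ) - (K ω:ℝ)) 0 + gD ω := by
    intro ω
    simp only [hg2def, hgDdef]
    by_cases h : T ω ≤ n * K' ω
    · rw [if_pos h, if_pos h, if_pos h]
      have h1 : K ω ≤ K' ω := by
        rw [hKf ω]; exact (hdiv _ _).mp h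
      rw [max_eq_left (by
        have := Nat.cast_le (α := ℝ) |>.mpr h1
        linarith : (0:ℝ) ≤ (K' ω:ℝ) - (K ω:ℝ))]
      push_cast
      ring
    · rw [if_neg h, if_neg h, if_neg h]
      have h1 : K' ω < K ω := by
        rw [hKf ω]
        by_contra hc
        exact h ((hdiv _ _).mpr (by omega))
      rw [max_eq_right (by
        have := Nat.cast_lt (α := ℝ) |>.mpr h1
        linarith : (K' ω:ℝ) - (K ω:ℝ) ≤ 0)]
      ring
  -- integrability of the three pieces
  have hg2meas : Measurable g2 := by
    apply Measurable.ite hTK'm _ measurable_const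
    exact ((measurable_of_countable (fun m : ℕ => ((n * m : ℕ) : ℝ))).comp hKm).sub
      (hcastm.comp hT)
  have hg2int : Integrable g2 P := by
    apply Integrable.mono' (integrable_const (n:ℝ)) hg2meas.aestronglyMeasurable
    apply ae_of_all
    intro ω
    simp only [hg2def]
    by_cases h : T ω ≤ n * K' ω
    · rw [if_pos h]
      have h1 : (T ω : ℝ) ≤ ((n * K ω : ℕ) : ℝ) := by
        exact_mod_cast Nat.cast_le.mpr (by rw [hKf ω]; exact hktmul _)
      have h2 := Nat.cast_le (α := ℝ) |>.mpr (by rw [hKf ω]; exact hktub (T ω) :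
        n * K ω ≤ T ω + n)
      rw [Real.norm_eq_abs, abs_of_nonneg (by linarith)]
      push_cast at h2 ⊢
      linarith
    · rw [if_neg h]
      simp only [norm_zero]
      positivity
  have hmaxmeas : Measurable (fun ω => max ((K' ω:ℝ) - (K ω:ℝ)) 0) :=
    ((hcastm.comp hK').sub (hcastm.comp hKm)).max measurable_const
  have hmaxint : Integrable (fun ω => max ((K' ω:ℝ) - (K ω:ℝ)) 0) P := by
    apply Integrable.mono' hK'int hmaxmeas.aestronglyMeasurable
    apply ae_of_all
    intro ω
    rw [Real.norm_eq_abs, abs_of_nonneg (le_max_right _ _)]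
    apply max_le
    · have : (0:ℝ) ≤ (K ω : ℝ) := Nat.cast_nonneg _
      linarith
    · positivity
  -- the network-delay part
  set A : ℕ → Set Ω := fun b => {ω | K' ω = b ∧ T ω ≤ n * b} with hAdef
  have hAm : ∀ b, MeasurableSet (A b) :=
    fun b => (hK' (measurableSet_singleton b)).inter (hT measurableSet_Iic)
  have hAd : Pairwise (Function.onFun Disjoint A) := by
    intro a b hab
    simp only [Function.onFun, Set.disjoint_left]
    intro ω h1 h2
    exact hab (h1.1.symm.trans h2.1)
  have hAU : ⋃ b, A b = {ω | T ω ≤ n * K' ω} := by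
    ext ω
    simp only [Set.mem_iUnion, hAdef, Set.mem_setOf_eq]
    constructor
    · rintro ⟨b, h1, h2⟩; rw [h1]; exact h2
    · intro h; exact ⟨K' ω, rfl, h⟩
  obtain ⟨hAsum, hAtsum⟩ := tsum_meas_toReal P A hAm hAd
  rw [hAU, ← hQdef] at hAtsum
  have hd0 : 0 ≤ d := by
    rw [← hDmean 0]
    exact integral_nonneg (hDnonneg 0)
  have hintfb : ∀ b, Integrable (Set.indicator (A b) (D b)) P :=
    fun b => (hDint b).indicator (hAm b)
  have hfbval : ∀ b : ℕ, ∫ ω, Set.indicator (A b) (D b) ω ∂P = d * (P (A b)).toReal := by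
    intro b
    set χ : ℕ × ℕ → ℝ := Set.indicator {x : ℕ × ℕ | x.2 = b ∧ x.1 ≤ n * b} (fun _ => 1)
      with hχdef
    have hindep : IndepFun (D b) (fun ω => χ (T ω, K' ω)) P :=
      hDind.comp (measurable_pi_apply b) (measurable_of_countable χ)
    have hmul := hindep.integral_mul_eq_mul_integral (hDmeas b).aestronglyMeasurable
      ((measurable_of_countable χ).comp (hT.prodMk hK')).aestronglyMeasurable
    have hptw : Set.indicator (A b) (D b) = (D b * fun ω => χ (T ω, K' ω)) := by
      funext ω
      by_cases h : ω ∈ A b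
      · have hx : (T ω, K' ω) ∈ {x : ℕ × ℕ | x.2 = b ∧ x.1 ≤ n * b} := ⟨h.1, h.2⟩
        simp [Set.indicator_of_mem h, hχdef, Set.indicator_of_mem hx]
      · have hx : (T ω, K' ω) ∉ {x : ℕ × ℕ | x.2 = b ∧ x.1 ≤ n * b} := fun hc => h ⟨hc.1, hc.2⟩
        simp [Set.indicator_of_notMem h, hχdef, Set.indicator_of_notMem hx]
    have hχint : ∫ ω, χ (T ω, K' ω) ∂P = (P (A b)).toReal := by
      have h : (fun ω => χ (T ω, K' ω)) = Set.indicator (A b) (fun _ => (1:ℝ)) := by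
        funext ω
        by_cases h : ω ∈ A b
        · have hx : (T ω, K' ω) ∈ {x : ℕ × ℕ | x.2 = b ∧ x.1 ≤ n * b} := ⟨h.1, h.2⟩
          simp [hχdef, Set.indicator_of_mem h, Set.indicator_of_mem hx]
        · have hx : (T ω, K' ω) ∉ {x : ℕ × ℕ | x.2 = b ∧ x.1 ≤ n * b} := fun hc => h ⟨hc.1, hc.2⟩
          simp [hχdef, Set.indicator_of_notMem h, Set.indicator_of_notMem hx]
      rw [h, integral_indicator_const (1:ℝ) (hAm b)]
      simp [measureReal_def]
    rw [hptw, hmul, hDmean b, hχint]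
  have hnormfb : ∀ b : ℕ, ∫⁻ ω, (‖Set.indicator (A b) (D b) ω‖₊ : ℝ≥0∞) ∂P
      = ENNReal.ofReal d * P (A b) := by
    intro b
    have hnn : ∀ ω, 0 ≤ Set.indicator (A b) (D b) ω :=
      fun ω => Set.indicator_nonneg (fun x _ => hDnonneg b x) ω
    simp_rw [← enorm_eq_nnnorm]
    rw [lintegral_congr (fun ω => Real.enorm_eq_ofReal (hnn ω)),
      ← ofReal_integral_eq_lintegral_ofReal (hintfb b) (ae_of_all _ hnn),
      hfbval b, ENNReal.ofReal_mul hd0, ENNReal.ofReal_toReal (measure_ne_top P _)]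
  have hsumbound : ∑' b, ∫⁻ ω, (‖Set.indicator (A b) (D b) ω‖₊ : ℝ≥0∞) ∂P ≠ ⊤ := by
    rw [tsum_congr hnormfb, ENNReal.tsum_mul_left, ← measure_iUnion hAd hAm]
    exact ENNReal.mul_ne_top ENNReal.ofReal_ne_top (measure_ne_top P _)
  have hgDptw : ∀ ω, gD ω = ∑' b, Set.indicator (A b) (D b) ω := by
    intro ω
    rw [tsum_eq_single (K' ω) (fun b hb => Set.indicator_of_notMem
      (fun hc => hb hc.1.symm) _)]
    simp only [hgDdef]
    by_cases h : T ω ≤ n * K' ω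
    · have hmem : ω ∈ A (K' ω) := ⟨rfl, h⟩
      rw [Set.indicator_of_mem hmem, if_pos h]
    · have hmem : ω ∉ A (K' ω) := fun hc => h hc.2
      rw [Set.indicator_of_notMem hmem, if_neg h]
  have hDK'meas : Measurable (fun ω => D (K' ω) ω) := by
    have h1 : Measurable (fun q : Ω × ℕ => D q.2 q.1) :=
      measurable_from_prod_countable_left (fun b => hDmeas b)
    exact h1.comp (measurable_id.prodMk hK')
  have hgDmeas : Measurable gD := Measurable.ite hTK'm hDK'meas measurable_const
  have hgDint : Integrable gD P := by
    refine ⟨hgDmeas.aestronglyMeasurable, ?_⟩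
    have hpt2 : ∀ ω, (‖gD ω‖₊ : ℝ≥0∞) = ∑' b, (‖Set.indicator (A b) (D b) ω‖₊ : ℝ≥0∞) := by
      intro ω
      rw [tsum_eq_single (K' ω) (fun b hb => by
        rw [Set.indicator_of_notMem (fun hc => hb hc.1.symm)]; simp)]
      rw [hgDptw ω, tsum_eq_single (K' ω) (fun b hb => Set.indicator_of_notMem
        (fun hc => hb hc.1.symm) _)]
    show ∫⁻ ω, (‖gD ω‖₊ : ℝ≥0∞) ∂P < ⊤
    rw [lintegral_congr hpt2]
    simp_rw [← enorm_eq_nnnorm]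
    rw [
      lintegral_tsum (fun b => ((hDmeas b).indicator (hAm b)).enorm.aemeasurable)]
    exact lt_top_iff_ne_top.mpr hsumbound
  have hgDval : ∫ ω, gD ω ∂P = d * Q := by
    calc ∫ ω, gD ω ∂P = ∫ ω, ∑' b, Set.indicator (A b) (D b) ω ∂P :=
          integral_congr_ae (ae_of_all _ hgDptw)
      _ = ∑' b, ∫ ω, Set.indicator (A b) (D b) ω ∂P :=
          integral_tsum (fun b => ((hDmeas b).indicator (hAm b)).aestronglyMeasurable) hsumbound
      _ = ∑' b, d * (P (A b)).toReal := tsum_congr hfbval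
      _ = d * Q := by rw [tsum_mul_left, hAtsum]
  -- the coarse-sampling part
  have hg2ptw : ∀ ω, g2 ω = ∑' t, Set.indicator (B t) (fun _ => c t) ω := by
    intro ω
    rw [tsum_eq_single (T ω) (fun t ht => Set.indicator_of_notMem
      (fun hc => ht hc.1.symm) _)]
    simp only [hg2def]
    by_cases h : T ω ≤ n * K' ω
    · have hmem : ω ∈ B (T ω) := ⟨rfl, (hdiv _ _).mp h⟩
      rw [Set.indicator_of_mem hmem, if_pos h]
      simp only [hcdef]
      rw [hKf ω]
    · have hmem : ω ∉ B (T ω) := fun hc => h ((hdiv _ _).mpr hc.2)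
      rw [Set.indicator_of_notMem hmem, if_neg h]
  have hg2bound : ∑' t, ∫⁻ ω, (‖Set.indicator (B t) (fun _ => c t) ω‖₊ : ℝ≥0∞) ∂P ≠ ⊤ := by
    have heach : ∀ t, ∫⁻ ω, (‖Set.indicator (B t) (fun _ => c t) ω‖₊ : ℝ≥0∞) ∂P
        = (‖c t‖₊ : ℝ≥0∞) * P (B t) := by
      intro t
      rw [show (fun ω => (‖Set.indicator (B t) (fun _ => c t) ω‖₊ : ℝ≥0∞))
          = Set.indicator (B t) (fun _ => (‖c t‖₊ : ℝ≥0∞)) from funext fun ω => by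
        by_cases h : ω ∈ B t <;> simp [h]]
      exact lintegral_indicator_const (hBm t) _
    rw [tsum_congr heach]
    have hle : ∀ t, (‖c t‖₊ : ℝ≥0∞) * P (B t) ≤ ENNReal.ofReal n * P (B t) := by
      intro t
      apply mul_le_mul_left
      rw [← enorm_eq_nnnorm, Real.enorm_eq_ofReal (hc0 t)]
      exact ENNReal.ofReal_le_ofReal (hcn t)
    apply ne_top_of_le_ne_top _ (ENNReal.tsum_le_tsum hle)
    rw [ENNReal.tsum_mul_left, ← measure_iUnion hBd hBm]
    exact ENNReal.mul_ne_top ENNReal.ofReal_ne_top (measure_ne_top P _)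
  have hg2val : ∫ ω, g2 ω ∂P = ∑' t, c t * W t := by
    calc ∫ ω, g2 ω ∂P = ∫ ω, ∑' t, Set.indicator (B t) (fun _ => c t) ω ∂P :=
          integral_congr_ae (ae_of_all _ hg2ptw)
      _ = ∑' t, ∫ ω, Set.indicator (B t) (fun _ => c t) ω ∂P :=
          integral_tsum (fun t => (measurable_const.indicator (hBm t)).aestronglyMeasurable)
            hg2bound
      _ = ∑' t, c t * W t := by
          apply tsum_congr
          intro t
          rw [integral_indicator_const (c t) (hBm t), smul_eq_mul, hWdef]
          exact mul_comm _ _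
  -- assemble
  rw [show (fun ω => if T ω ≤ n * K' ω
      then ((n * K' ω : ℕ) : ℝ) + D (K' ω) ω - (T ω : ℝ) else 0)
      = fun ω => g2 ω + (n:ℝ) * max ((K' ω:ℝ) - (K ω:ℝ)) 0 + gD ω from funext hsplit]
  have hintn : Integrable (fun ω => (n:ℝ) * max ((K' ω:ℝ) - (K ω:ℝ)) 0) P :=
    hmaxint.const_mul (n:ℝ)
  have hint12 : Integrable (fun ω => g2 ω + (n:ℝ) * max ((K' ω:ℝ) - (K ω:ℝ)) 0) P :=
    hg2int.add hintn
  rw [integral_add hint12 hgDint, integral_add hg2int hintn, integral_const_mul]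
  rw [hg2val, hgDval, hSval]
  ring
end

section
/- Let T be a random variable with P(T=t)=p(1-p)^{t-1} for integers t≥1, where 0<p<1. Let n≥1 be an integer, K=⌈T/n⌉, and let K̃ be an ℕ-valued random variable such that T and K̃ are conditionally independent given K. Let l = n - 1/p + n(1-p)^n/(1-(1-p)^n). Then E[(nK - T)·1{K̃ ≥ K}] = l·P(K̃ ≥ K). -/
open MeasureTheory ProbabilityTheory

lemma key_alg (q : ℝ) (n : ℕ) :
    (1 - q) ^ 2 * ∑ j ∈ Finset.range n, ((n : ℝ) - 1 - j) * q ^ j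
      = n * (1 - q) - (1 - q ^ n) := by
  induction n with
  | zero => simp
  | succ n ih =>
    have hg : (∑ j ∈ Finset.range n, q ^ j) * (q - 1) = q ^ n - 1 := geom_sum_mul q n
    have hstep : ∑ j ∈ Finset.range (n + 1), (((n : ℝ) + 1) - 1 - j) * q ^ j
        = (∑ j ∈ Finset.range n, ((n : ℝ) - 1 - j) * q ^ j)
          + ∑ j ∈ Finset.range n, q ^ j := by
      rw [Finset.sum_range_succ, ← Finset.sum_add_distrib]
      have h0 : (((n : ℝ) + 1) - 1 - n) * q ^ n = 0 := by ring
      rw [h0, add_zero]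
      exact Finset.sum_congr rfl fun j hj => by ring
    push_cast
    rw [hstep]
    push_cast at ih
    linear_combination ih - (1 - q) * hg

lemma key_alg2 (n : ℕ) (p q lv : ℝ) (hq : q = 1 - p) (hp : p ≠ 0)
    (hqn : 1 - q ^ n ≠ 0)
    (hlv : lv = (n : ℝ) - 1 / p + (n : ℝ) * q ^ n / (1 - q ^ n)) :
    (∑ j ∈ Finset.range n, ((n : ℝ) - 1 - j) * q ^ j) * (p / (1 - q ^ n)) = lv := by
  have hA := key_alg q n
  rw [show (1 : ℝ) - q = p by rw [hq]; ring] at hA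
  rw [hlv]
  field_simp
  linear_combination (1 - q ^ n) * hA + (q ^ n) * hA

lemma hasSum_toReal_measure {Ω : Type*} [MeasurableSpace Ω] (P : Measure Ω) [IsFiniteMeasure P]
    (A : ℕ → Set Ω) (hm : ∀ i, MeasurableSet (A i)) (hd : Pairwise (Function.onFun Disjoint A)) :
    HasSum (fun i => (P (A i)).toReal) ((P (⋃ i, A i)).toReal) := by
  have hU : P (⋃ i, A i) = ∑' i, P (A i) := measure_iUnion hd hm
  have h1 : Summable fun i => (P (A i)).toReal :=
    ENNReal.summable_toReal (by rw [← hU]; exact measure_ne_top _ _)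
  have h2 : ∑' i, (P (A i)).toReal = (P (⋃ i, A i)).toReal := by
    rw [hU, ENNReal.tsum_toReal_eq fun i => measure_ne_top _ _]
  exact h2 ▸ h1.hasSum


set_option maxHeartbeats 1000000 in
/-- Coarse-sampling-delay decoupling step in the proof of Theorem 1: if the change
time `T` is geometric (`P(T = t) = p (1-p)^(t-1)` for `t ≥ 1`), sampling is every
`n` slots so that `K = ⌈T/n⌉`, and the stopping batch index `K'` is conditionally
independent of `T` given `K`, then
`E[(nK - T) · 1{K' ≥ K}] = l · P(K' ≥ K)` with
`l = n - 1/p + n (1-p)^n / (1 - (1-p)^n)`. -/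
theorem coarse_sampling_delay_decoupling
    {Ω : Type*} [MeasurableSpace Ω] (P : Measure Ω) [IsProbabilityMeasure P]
    (p : ℝ) (hp0 : 0 < p) (hp1 : p < 1)
    (T : Ω → ℕ) (hT : Measurable T)
    (hTdist : ∀ t : ℕ, 1 ≤ t →
      (P {ω | T ω = t}).toReal = p * (1 - p) ^ (t - 1))
    (n : ℕ) (hn : 1 ≤ n)
    (K : Ω → ℕ) (hK : ∀ ω, K ω = (T ω + n - 1) / n)
    (K' : Ω → ℕ) (hK' : Measurable K')
    (hcondind : ∀ t b k : ℕ,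
      (P {ω | T ω = t ∧ K' ω = b ∧ K ω = k}).toReal * (P {ω | K ω = k}).toReal
        = (P {ω | T ω = t ∧ K ω = k}).toReal
            * (P {ω | K' ω = b ∧ K ω = k}).toReal)
    (l : ℝ)
    (hl : l = (n : ℝ) - 1 / p + (n : ℝ) * (1 - p) ^ n / (1 - (1 - p) ^ n)) :
    ∫ ω, (if K ω ≤ K' ω then ((n * K ω : ℕ) : ℝ) - (T ω : ℝ) else 0) ∂P
      = l * (P {ω | K ω ≤ K' ω}).toReal := by
  have hn0 : 0 < n := hn
  set q : ℝ := 1 - p with hq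
  have hq0 : 0 < q := by rw [hq]; linarith
  have hq1 : q < 1 := by rw [hq]; linarith
  have hqn1 : q ^ n < 1 := pow_lt_one₀ hq0.le hq1 (by omega)
  have h1qn : 0 < 1 - q ^ n := by linarith
  -- the batch-index function
  set kf : ℕ → ℕ := fun t => (t + n - 1) / n with hkfdef
  have hKf : ∀ ω, K ω = kf (T ω) := hK
  have hKmeas : Measurable K := by
    have : K = (fun t => kf t) ∘ T := funext hKf
    rw [this]; exact measurable_from_top.comp hT
  -- nat arithmetic about kf
  have hkf0 : kf 0 = 0 := by
    simp only [hkfdef]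
    exact Nat.div_eq_of_lt (by omega)
  have hkfmj : ∀ m j : ℕ, j < n → kf (m * n + j + 1) = m + 1 := by
    intro m j hj
    have h1 : m * n + j + 1 + n - 1 = (j + n) + m * n := by omega
    simp only [hkfdef]
    rw [h1, Nat.add_mul_div_right _ _ hn0, Nat.add_div_right _ hn0,
      Nat.div_eq_of_lt hj]
    omega
  have hkf_le : ∀ t : ℕ, t ≤ n * kf t ∧ n * kf t ≤ t + n := by
    intro t
    rcases Nat.eq_zero_or_pos t with rfl | ht
    · rw [hkf0]; omega
    · have hd := Nat.div_add_mod (t + n - 1) n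
      have hm := Nat.mod_lt (t + n - 1) hn0
      have hrw : (t + n - 1) / n = kf t := rfl
      rw [hrw] at hd
      generalize n * kf t = a at hd ⊢
      omega
  have hkf_zero : ∀ t : ℕ, kf t = 0 → t = 0 := by
    intro t h
    have := (hkf_le t).1
    rw [h] at this; omega
  have hkf_bounds : ∀ t m : ℕ, kf t = m + 1 → m * n + 1 ≤ t ∧ t ≤ m * n + n := by
    intro t m h
    have hd := Nat.div_add_mod (t + n - 1) n
    have hm := Nat.mod_lt (t + n - 1) hn0
    have hrw : (t + n - 1) / n = kf t := rfl
    rw [hrw, h] at hd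
    have hmul : n * (m + 1) = m * n + n := by ring
    rw [hmul] at hd
    generalize m * n = a at hd ⊢
    omega
  -- basic sets
  set E : Set Ω := {ω | K ω ≤ K' ω} with hEdef
  have hEm : MeasurableSet E := measurableSet_le hKmeas hK'
  have hStm : ∀ t : ℕ, MeasurableSet {ω | T ω = t} := fun t => hT (measurableSet_singleton t)
  have hdisjT : Pairwise (Function.onFun Disjoint (fun t => {ω | T ω = t})) := by
    intro i j hij
    simp only [Function.onFun]
    apply Set.disjoint_left.mpr
    intro ω h1 h2
    have h1' : T ω = i := h1
    have h2' : T ω = j := h2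
    exact hij (h1'.symm.trans h2')
  have hUST : (⋃ t, {ω | T ω = t}) = Set.univ :=
    Set.eq_univ_of_forall fun ω => Set.mem_iUnion.mpr ⟨T ω, rfl⟩
  -- the integrand
  set g : Ω → ℝ := fun ω => if K ω ≤ K' ω then ((n * K ω : ℕ) : ℝ) - (T ω : ℝ) else 0 with hgdef
  have hgmeas : Measurable g := by
    apply Measurable.ite (measurableSet_le hKmeas hK')
    · exact Measurable.sub
        ((measurable_from_top (f := fun k : ℕ => ((n * k : ℕ) : ℝ))).comp hKmeas)
        ((measurable_from_top (f := fun t : ℕ => ((t : ℕ) : ℝ))).comp hT)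
    · exact measurable_const
  have hgbdd : ∀ ω, ‖g ω‖ ≤ (n : ℝ) := by
    intro ω
    have h := hkf_le (T ω)
    rw [← hKf ω] at h
    simp only [hgdef]
    split
    · have h1 : (T ω : ℝ) ≤ ((n * K ω : ℕ) : ℝ) := by exact_mod_cast h.1
      have h2 : ((n * K ω : ℕ) : ℝ) ≤ (T ω : ℝ) + n := by exact_mod_cast h.2
      rw [Real.norm_eq_abs, abs_le]
      have h3 : (0:ℝ) ≤ (n:ℝ) := Nat.cast_nonneg n
      constructor <;> linarith
    · simp
  have hgint : Integrable g P :=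
    (integrable_const (n : ℝ)).mono' hgmeas.aestronglyMeasurable (ae_of_all _ hgbdd)
  -- abbreviations
  set rr : ℕ → ℝ := fun t => (P ({ω | T ω = t} ∩ E)).toReal with hrrdef
  set ss : ℕ → ℝ := fun k => (P (E ∩ {ω | K ω = k})).toReal with hssdef
  set D : ℕ → ℝ := fun k => (P {ω | K ω = k}).toReal with hDdef
  set c : ℕ → ℝ := fun t => ((n * kf t : ℕ) : ℝ) - (t : ℝ) with hcdef
  -- Step 1 : the integral as a sum over values of T
  have hterm : ∀ t : ℕ, ∫ ω in {ω | T ω = t}, g ω ∂P = c t * rr t := by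
    intro t
    have hcg : Set.EqOn g (E.indicator fun _ => c t) {ω | T ω = t} := by
      intro ω hω
      have hTt : T ω = t := hω
      have hKt : K ω = kf t := by rw [hKf ω, hTt]
      by_cases hE : K ω ≤ K' ω
      · have hmem : ω ∈ E := hE
        simp only [hgdef, if_pos hE, Set.indicator_of_mem hmem, hcdef, hKt, hTt]
      · have hmem : ω ∉ E := hE
        simp only [hgdef, if_neg hE, Set.indicator_of_notMem hmem]
    rw [setIntegral_congr_fun (hStm t) hcg, setIntegral_indicator hEm, setIntegral_const,
      smul_eq_mul, mul_comm]
    rfl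
  have hsumInt : HasSum (fun t => c t * rr t) (∫ ω, g ω ∂P) := by
    have h := hasSum_integral_iUnion hStm hdisjT (by rw [hUST]; exact hgint.integrableOn)
    rw [hUST, Measure.restrict_univ] at h
    have h2 : (fun t => ∫ ω in {ω | T ω = t}, g ω ∂P) = fun t => c t * rr t := funext hterm
    rwa [h2] at h
  have hLHS : ∫ ω, g ω ∂P = ∑' t, c t * rr t := hsumInt.tsum_eq.symm
  have hfsummable : Summable fun t => c t * rr t := hsumInt.summable
  -- P(T = 0) = 0
  have hT0 : P {ω | T ω = 0} = 0 := by
    have h1 : ∑' t, P {ω | T ω = t} = 1 := by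
      rw [← measure_iUnion hdisjT hStm, hUST, measure_univ]
    have h2 : ∀ u : ℕ, P {ω | T ω = u + 1} = ENNReal.ofReal (p * q ^ u) := by
      intro u
      rw [← ENNReal.ofReal_toReal (measure_ne_top P {ω | T ω = u + 1})]
      congr 1
      have h := hTdist (u + 1) (by omega)
      simpa using h
    have hsg : Summable fun u : ℕ => p * q ^ u :=
      (summable_geometric_of_lt_one hq0.le hq1).mul_left p
    have h3 : ∑' u : ℕ, P {ω | T ω = u + 1} = 1 := by
      simp only [h2]
      rw [← ENNReal.ofReal_tsum_of_nonneg (fun u => by positivity) hsg]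
      rw [tsum_mul_left, tsum_geometric_of_lt_one hq0.le hq1]
      have hqq : (1 : ℝ) - q = p := by rw [hq]; ring
      rw [hqq, mul_inv_cancel₀ hp0.ne', ENNReal.ofReal_one]
    have h4 : ∑' t, P {ω | T ω = t} = P {ω | T ω = 0} + ∑' u, P {ω | T ω = u + 1} :=
      tsum_eq_zero_add' (f := fun t => P {ω | T ω = t}) ENNReal.summable
    rw [h4, h3] at h1
    have h5 : P {ω | T ω = 0} + 1 = 0 + 1 := by rw [h1, zero_add]
    exact WithTop.add_right_cancel ENNReal.one_ne_top h5
  -- geometric sum fact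
  have hpq : (1 : ℝ) - q = p := by rw [hq]; ring
  have hgeo : p * ∑ j ∈ Finset.range n, q ^ j = 1 - q ^ n := by
    have hgs := geom_sum_mul q n
    linear_combination (∑ j ∈ Finset.range n, q ^ j) * hpq.symm - hgs
  -- distribution of K
  have hD : ∀ m : ℕ, D (m + 1) = q ^ (m * n) * (1 - q ^ n) := by
    intro m
    have hset : {ω | K ω = m + 1} = ⋃ j ∈ Finset.range n, {ω | T ω = m * n + j + 1} := by
      ext ω
      simp only [Set.mem_iUnion, Set.mem_setOf_eq, Finset.mem_range, exists_prop]
      constructor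
      · intro h
        have hkt : kf (T ω) = m + 1 := by rw [← hKf ω]; exact h
        have hb := hkf_bounds (T ω) m hkt
        exact ⟨T ω - (m * n + 1), by omega, by omega⟩
      · rintro ⟨j, hj, hTω⟩
        rw [hKf ω, hTω]
        exact hkfmj m j hj
    have hPm : P {ω | K ω = m + 1} = ∑ j ∈ Finset.range n, P {ω | T ω = m * n + j + 1} := by
      rw [hset]
      refine measure_biUnion_finset ?_ fun j _ => hStm _
      intro i hi j hj hij
      exact hdisjT (show m * n + i + 1 ≠ m * n + j + 1 by omega)
    simp only [hDdef]
    rw [hPm, ENNReal.toReal_sum fun j _ => measure_ne_top _ _]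
    have hterms : ∀ j ∈ Finset.range n, (P {ω | T ω = m * n + j + 1}).toReal
        = (p * q ^ j) * q ^ (m * n) := by
      intro j hj
      rw [hTdist (m * n + j + 1) (by omega), show m * n + j + 1 - 1 = m * n + j by omega,
        pow_add]
      ring
    rw [Finset.sum_congr rfl hterms, ← Finset.sum_mul, ← Finset.mul_sum]
    rw [hgeo]
    ring
  have hDpos : ∀ m : ℕ, 0 < D (m + 1) := by
    intro m
    rw [hD m]
    exact mul_pos (pow_pos hq0 _) h1qn
  -- conditional independence, summed over the stopping batch values
  have hrr : ∀ t m : ℕ, kf t = m + 1 → rr t * D (m + 1) = p * q ^ (t - 1) * ss (m + 1) := by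
    intro t m hkt
    have ht1 : 1 ≤ t := by have := (hkf_bounds t m hkt).1; omega
    set A : ℕ → Set Ω :=
      fun b => if m + 1 ≤ b then {ω | T ω = t} ∩ {ω | K' ω = b} else ∅ with hAdef
    set C : ℕ → Set Ω :=
      fun b => if m + 1 ≤ b then {ω | K' ω = b} ∩ {ω | K ω = m + 1} else ∅ with hCdef
    have hAm : ∀ b, MeasurableSet (A b) := by
      intro b
      simp only [hAdef]
      split
      · exact (hStm t).inter (hK' (measurableSet_singleton b))
      · exact MeasurableSet.empty
    have hCm : ∀ b, MeasurableSet (C b) := by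
      intro b
      simp only [hCdef]
      split
      · exact (hK' (measurableSet_singleton b)).inter (hKmeas (measurableSet_singleton (m + 1)))
      · exact MeasurableSet.empty
    have hAK' : ∀ b ω, ω ∈ A b → K' ω = b := by
      intro b ω hω
      simp only [hAdef] at hω
      split at hω
      · exact hω.2
      · exact absurd hω (Set.notMem_empty ω)
    have hCK' : ∀ b ω, ω ∈ C b → K' ω = b := by
      intro b ω hω
      simp only [hCdef] at hω
      split at hω
      · exact hω.1
      · exact absurd hω (Set.notMem_empty ω)
    have hAd : Pairwise (Function.onFun Disjoint A) := by
      intro i j hij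
      simp only [Function.onFun]
      apply Set.disjoint_left.mpr
      intro ω h1 h2
      exact hij ((hAK' i ω h1).symm.trans (hAK' j ω h2))
    have hCd : Pairwise (Function.onFun Disjoint C) := by
      intro i j hij
      simp only [Function.onFun]
      apply Set.disjoint_left.mpr
      intro ω h1 h2
      exact hij ((hCK' i ω h1).symm.trans (hCK' j ω h2))
    have hAU : (⋃ b, A b) = {ω | T ω = t} ∩ E := by
      ext ω
      simp only [Set.mem_iUnion, hAdef]
      constructor
      · rintro ⟨b, hb⟩
        split at hb
        · obtain ⟨h1, h2⟩ := hb
          have hTt : T ω = t := h1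
          have hK'b : K' ω = b := h2
          refine ⟨h1, ?_⟩
          show K ω ≤ K' ω
          rw [hKf ω, hTt, hkt, hK'b]
          assumption
        · exact absurd hb (Set.notMem_empty ω)
      · rintro ⟨h1, h2⟩
        have hTt : T ω = t := h1
        have hKω : K ω = m + 1 := by rw [hKf ω, hTt, hkt]
        have hle : K ω ≤ K' ω := h2
        refine ⟨K' ω, ?_⟩
        rw [if_pos (by rw [← hKω]; exact hle)]
        exact ⟨h1, rfl⟩
    have hCU : (⋃ b, C b) = E ∩ {ω | K ω = m + 1} := by
      ext ω
      simp only [Set.mem_iUnion, hCdef]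
      constructor
      · rintro ⟨b, hb⟩
        split at hb
        · obtain ⟨h1, h2⟩ := hb
          have hK'b : K' ω = b := h1
          have hKω : K ω = m + 1 := h2
          refine ⟨?_, h2⟩
          show K ω ≤ K' ω
          rw [hKω, hK'b]
          assumption
        · exact absurd hb (Set.notMem_empty ω)
      · rintro ⟨h1, h2⟩
        have hKω : K ω = m + 1 := h2
        have hle : K ω ≤ K' ω := h1
        refine ⟨K' ω, ?_⟩
        rw [if_pos (by rw [← hKω]; exact hle)]
        exact ⟨rfl, h2⟩
    have hhA : HasSum (fun b => (P (A b)).toReal) (rr t) := by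
      have h := hasSum_toReal_measure P A hAm hAd
      rwa [hAU] at h
    have hhC : HasSum (fun b => (P (C b)).toReal) (ss (m + 1)) := by
      have h := hasSum_toReal_measure P C hCm hCd
      rwa [hCU] at h
    have hstep : ∀ b, (P (A b)).toReal * D (m + 1) = p * q ^ (t - 1) * (P (C b)).toReal := by
      intro b
      by_cases hb : m + 1 ≤ b
      · simp only [hAdef, hCdef, if_pos hb]
        have h1 : {ω | T ω = t ∧ K' ω = b ∧ K ω = m + 1} = {ω | T ω = t} ∩ {ω | K' ω = b} := by
          ext ω
          simp only [Set.mem_setOf_eq, Set.mem_inter_iff]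
          constructor
          · rintro ⟨ha, hbb, _⟩; exact ⟨ha, hbb⟩
          · rintro ⟨ha, hbb⟩; exact ⟨ha, hbb, by rw [hKf ω, ha, hkt]⟩
        have h2 : {ω | T ω = t ∧ K ω = m + 1} = {ω | T ω = t} := by
          ext ω
          simp only [Set.mem_setOf_eq]
          constructor
          · rintro ⟨ha, _⟩; exact ha
          · intro ha; exact ⟨ha, by rw [hKf ω, ha, hkt]⟩
        have h3 : {ω | K' ω = b ∧ K ω = m + 1} = {ω | K' ω = b} ∩ {ω | K ω = m + 1} := by
          ext ω; simp [Set.mem_setOf_eq]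
        have h := hcondind t b (m + 1)
        rw [h1, h2, h3] at h
        rw [h, hTdist t ht1]
      · simp only [hAdef, hCdef, if_neg hb]
        simp
    calc rr t * D (m + 1) = (∑' b, (P (A b)).toReal) * D (m + 1) := by rw [hhA.tsum_eq]
      _ = ∑' b, (P (A b)).toReal * D (m + 1) := tsum_mul_right.symm
      _ = ∑' b, p * q ^ (t - 1) * (P (C b)).toReal := tsum_congr hstep
      _ = p * q ^ (t - 1) * ∑' b, (P (C b)).toReal := tsum_mul_left
      _ = p * q ^ (t - 1) * ss (m + 1) := by rw [hhC.tsum_eq]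
  -- distribution of the event over values of K
  have hBm : ∀ k : ℕ, MeasurableSet ((fun k => E ∩ {ω | K ω = k}) k) :=
    fun k => hEm.inter (hKmeas (measurableSet_singleton k))
  have hBd : Pairwise (Function.onFun Disjoint (fun k => E ∩ {ω | K ω = k})) := by
    intro i j hij
    simp only [Function.onFun]
    apply Set.disjoint_left.mpr
    intro ω h1 h2
    have h1' : K ω = i := h1.2
    have h2' : K ω = j := h2.2
    exact hij (h1'.symm.trans h2')
  have hBU : (⋃ k, E ∩ {ω | K ω = k}) = E := by
    ext ω
    simp only [Set.mem_iUnion, Set.mem_inter_iff, Set.mem_setOf_eq]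
    constructor
    · rintro ⟨k, hk, _⟩; exact hk
    · intro h; exact ⟨K ω, h, rfl⟩
  have hssSum : HasSum ss ((P E).toReal) := by
    have h := hasSum_toReal_measure P (fun k => E ∩ {ω | K ω = k}) hBm hBd
    rw [hBU] at h
    exact h
  have hss0 : ss 0 = 0 := by
    have hsub : E ∩ {ω | K ω = 0} ⊆ {ω | T ω = 0} := by
      intro ω hω
      have h2 : K ω = 0 := hω.2
      show T ω = 0
      exact hkf_zero (T ω) (by rw [← hKf ω]; exact h2)
    have hle := measure_mono (μ := P) hsub
    rw [hT0] at hle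
    simp only [hssdef]
    rw [le_zero_iff.mp hle, ENNReal.toReal_zero]
  have htsum_ss : ∑' m : ℕ, ss (m + 1) = (P E).toReal := by
    have h := Summable.tsum_eq_zero_add hssSum.summable
    rw [hss0, zero_add] at h
    rw [← h, hssSum.tsum_eq]
  -- the block sums
  have hblock : ∀ m : ℕ, ∑ j ∈ Finset.range n, c (m * n + j + 1) * rr (m * n + j + 1)
      = l * ss (m + 1) := by
    intro m
    have hsumc : ∀ j ∈ Finset.range n, c (m * n + j + 1) * rr (m * n + j + 1)
        = (((n : ℝ) - 1 - j) * q ^ j) * (p / (1 - q ^ n)) * ss (m + 1) := by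
      intro j hj
      rw [Finset.mem_range] at hj
      have hk := hkfmj m j hj
      have hc : c (m * n + j + 1) = (n : ℝ) - 1 - j := by
        simp only [hcdef, hk]
        push_cast
        ring
      have hrrt : rr (m * n + j + 1) = p * q ^ (m * n + j) * ss (m + 1) / D (m + 1) := by
        have h := hrr (m * n + j + 1) m hk
        rw [show m * n + j + 1 - 1 = m * n + j by omega] at h
        rw [eq_div_iff (hDpos m).ne']
        exact h
      rw [hc, hrrt, hD m, pow_add]
      have hq1 : q ^ (m * n) ≠ 0 := (pow_pos hq0 _).ne'
      field_simp
    rw [Finset.sum_congr rfl hsumc, ← Finset.sum_mul, ← Finset.sum_mul]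
    rw [key_alg2 n p q l hq hp0.ne' h1qn.ne' hl]
  -- assembling everything
  have hc0 : c 0 * rr 0 = 0 := by
    simp only [hcdef, hkf0]
    simp
  haveI : NeZero n := ⟨by omega⟩
  have hEq := Equiv.tsum_eq (Nat.divModEquiv n).symm (fun u => c (u + 1) * rr (u + 1))
  have hF : Summable fun mp : ℕ × Fin n =>
      c ((Nat.divModEquiv n).symm mp + 1) * rr ((Nat.divModEquiv n).symm mp + 1) :=
    ((Nat.divModEquiv n).symm.summable_iff).mpr ((summable_nat_add_iff 1).mpr hfsummable)
  have hinner : ∀ m : ℕ, (∑' j : Fin n,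
      c ((Nat.divModEquiv n).symm (m, j) + 1) * rr ((Nat.divModEquiv n).symm (m, j) + 1))
      = l * ss (m + 1) := by
    intro m
    rw [tsum_fintype]
    have heq2 : ∀ j : Fin n,
        c ((Nat.divModEquiv n).symm (m, j) + 1) * rr ((Nat.divModEquiv n).symm (m, j) + 1)
        = (fun j' : ℕ => c (m * n + j' + 1) * rr (m * n + j' + 1)) (j : ℕ) := by
      intro j
      simp [Nat.divModEquiv]
    rw [Finset.sum_congr rfl fun j _ => heq2 j]
    rw [Fin.sum_univ_eq_sum_range (fun j' : ℕ => c (m * n + j' + 1) * rr (m * n + j' + 1)) n]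
    exact hblock m
  calc ∫ ω, g ω ∂P = ∑' t, c t * rr t := hLHS
    _ = c 0 * rr 0 + ∑' u, c (u + 1) * rr (u + 1) := Summable.tsum_eq_zero_add hfsummable
    _ = ∑' u, c (u + 1) * rr (u + 1) := by rw [hc0, zero_add]
    _ = ∑' mp : ℕ × Fin n,
          c ((Nat.divModEquiv n).symm mp + 1) * rr ((Nat.divModEquiv n).symm mp + 1) := hEq.symm
    _ = ∑' m : ℕ, ∑' j : Fin n,
          c ((Nat.divModEquiv n).symm (m, j) + 1) * rr ((Nat.divModEquiv n).symm (m, j) + 1) :=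
        Summable.tsum_prod' hF fun m => Summable.of_finite
    _ = ∑' m : ℕ, l * ss (m + 1) := tsum_congr hinner
    _ = l * ∑' m : ℕ, ss (m + 1) := tsum_mul_left
    _ = l * (P E).toReal := by rw [htsum_ss]
end

section
/- Let T be a random variable with P(T=t)=p(1-p)^{t-1} for integers t≥1, where 0<p<1. Let n≥1 be an integer and K=⌈T/n⌉. Then for every integer b≥1, E[nK - T | K = b] = n - 1/p + n(1-p)^n/(1-(1-p)^n); consequently E[nK - T] = n - 1/p + n(1-p)^n/(1-(1-p)^n). -/
open MeasureTheory ProbabilityTheory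
open scoped ProbabilityTheory

lemma auxGeom (p q : ℝ) (hpq : p + q = 1) (hp : p ≠ 0) (m : ℕ) :
    ∑ i ∈ Finset.range m, q^i = (1-q^m)/p := by
  have hq1 : q ≠ 1 := fun h => hp (by rw [h] at hpq; linarith)
  rw [geom_sum_eq hq1, show q - 1 = -p from by linarith, div_neg, ← neg_div]
  congr 1; ring

lemma auxG (p q : ℝ) (hpq : p + q = 1) (hp : p ≠ 0) :
    ∀ m : ℕ, ∑ i ∈ Finset.range m, ((m:ℝ)-1-i)*q^i = m/p - (1-q^m)/p^2 := by
  intro m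
  induction m with
  | zero => simp
  | succ m ih =>
    rw [Finset.sum_range_succ]
    have e1 : ∀ i ∈ Finset.range m, ((m:ℝ)+1-1-i)*q^i = ((m:ℝ)-1-i)*q^i + q^i := by
      intro i _; ring
    push_cast
    rw [Finset.sum_congr rfl e1, Finset.sum_add_distrib, ih, auxGeom p q hpq hp, pow_succ]
    field_simp
    linear_combination (-(q ^ m)) * hpq

lemma auxDiv (n : ℕ) (hn : 1 ≤ n) (t b : ℕ) (hb : 1 ≤ b) :
    (t + n - 1) / n = b ↔ n*(b-1)+1 ≤ t ∧ t ≤ n*b := by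
  obtain ⟨c, rfl⟩ : ∃ c, b = c + 1 := ⟨b - 1, by omega⟩
  simp only [Nat.add_sub_cancel]
  constructor
  · intro h
    have hmod := Nat.div_add_mod (t+n-1) n
    have hmlt : (t+n-1) % n < n := Nat.mod_lt _ (by omega)
    rw [h, show n*(c+1) = n*c+n from by ring] at hmod
    constructor
    · omega
    · rw [show n*(c+1) = n*c+n from by ring]; omega
  · rintro ⟨ha, hb2⟩
    rw [show n*(c+1) = n*c+n from by ring] at hb2
    apply Nat.div_eq_of_lt_le
    · rw [show (c+1)*n = n*c + n from by ring]; omega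
    · rw [show (c+1+1)*n = n*c+n+n from by ring]; omega

/-- Mean coarse sampling delay: if `P(T = t) = p (1-p)^(t-1)` for `t ≥ 1` and
`K = ⌈T/n⌉`, then for every `b ≥ 1` the conditional mean of `nK - T` given
`K = b` equals `l = n - 1/p + n (1-p)^n / (1 - (1-p)^n)`; consequently the
unconditional mean of `nK - T` also equals `l`. -/
theorem mean_coarse_sampling_delay
    {Ω : Type*} [MeasurableSpace Ω] (P : Measure Ω) [IsProbabilityMeasure P]
    (p : ℝ) (hp0 : 0 < p) (hp1 : p < 1)
    (T : Ω → ℕ) (hT : Measurable T)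
    (hTdist : ∀ t : ℕ, 1 ≤ t →
      (P {ω | T ω = t}).toReal = p * (1 - p) ^ (t - 1))
    (n : ℕ) (hn : 1 ≤ n)
    (K : Ω → ℕ) (hK : ∀ ω, K ω = (T ω + n - 1) / n) :
    (∀ b : ℕ, 1 ≤ b →
      ∫ ω, (((n * K ω : ℕ) : ℝ) - (T ω : ℝ)) ∂(P[|{ω | K ω = b}])
        = (n : ℝ) - 1 / p + (n : ℝ) * (1 - p) ^ n / (1 - (1 - p) ^ n))
    ∧ ∫ ω, (((n * K ω : ℕ) : ℝ) - (T ω : ℝ)) ∂P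
        = (n : ℝ) - 1 / p + (n : ℝ) * (1 - p) ^ n / (1 - (1 - p) ^ n) := by
  set q : ℝ := 1 - p with hqdef
  have hq0 : 0 < q := by rw [hqdef]; linarith
  have hq1 : q < 1 := by rw [hqdef]; linarith
  have hpq : p + q = 1 := by rw [hqdef]; ring
  have hp : p ≠ 0 := ne_of_gt hp0
  have hQ0 : 0 < q^n := pow_pos hq0 n
  have hQ1 : q^n < 1 := pow_lt_one₀ hq0.le hq1 (by omega)
  have h1Q : (0:ℝ) < 1 - q^n := by linarith
  have h1Q' : (1:ℝ) - q^n ≠ 0 := ne_of_gt h1Q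
  set l : ℝ := (n : ℝ) - 1 / p + (n : ℝ) * q ^ n / (1 - q ^ n) with hldef
  set F : Ω → ℝ := fun ω => (((n * K ω : ℕ) : ℝ) - (T ω : ℝ)) with hFdef
  -- measurability
  have hKm : Measurable K := by
    have : K = (fun m => (m + n - 1)/n) ∘ T := funext hK
    rw [this]; exact Measurable.of_discrete.comp hT
  have hFm : Measurable F := by
    apply Measurable.sub
    · exact (Measurable.of_discrete (f := fun m : ℕ => ((n * m : ℕ) : ℝ))).comp hKm
    · exact (Measurable.of_discrete (f := fun m : ℕ => (m : ℝ))).comp hT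
  -- bounds
  have hTK : ∀ ω, T ω ≤ n * K ω ∧ n * K ω ≤ T ω + n := by
    intro ω; rw [hK ω]
    have hmod := Nat.div_add_mod (T ω + n - 1) n
    have hmlt : (T ω + n - 1) % n < n := Nat.mod_lt _ (by omega)
    omega
  have hFbound : ∀ ω, 0 ≤ F ω ∧ F ω ≤ n := by
    intro ω
    obtain ⟨h1, h2⟩ := hTK ω
    have c1 : (T ω : ℝ) ≤ ((n * K ω : ℕ) : ℝ) := by exact_mod_cast h1
    have c2 : ((n * K ω : ℕ) : ℝ) ≤ (T ω : ℝ) + n := by exact_mod_cast h2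
    constructor
    · simp only [hFdef]; linarith
    · simp only [hFdef]; have : (0:ℝ) ≤ T ω := Nat.cast_nonneg _; linarith
  have hFint : Integrable F P := by
    apply Integrable.mono' (integrable_const (n:ℝ)) hFm.aestronglyMeasurable
    filter_upwards with ω
    obtain ⟨h1, h2⟩ := hFbound ω
    rw [Real.norm_eq_abs, abs_le]
    have : (0:ℝ) ≤ n := Nat.cast_nonneg _
    constructor <;> linarith
  -- events
  have hA : ∀ t : ℕ, MeasurableSet {ω | T ω = t} := fun t => hT (measurableSet_singleton t)
  have hE : ∀ b : ℕ, MeasurableSet {ω | K ω = b} := fun b => hKm (measurableSet_singleton b)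
  have hdisj : ∀ s : Set ℕ, s.PairwiseDisjoint (fun t => {ω | T ω = t}) := by
    intro s i _ j _ hij
    rw [Function.onFun, Set.disjoint_left]
    rintro ω (rfl : T ω = i) (h2 : T ω = j)
    exact hij h2
  have hEset : ∀ b : ℕ, 1 ≤ b →
      {ω | K ω = b} = ⋃ t ∈ Finset.Icc (n*(b-1)+1) (n*b), {ω | T ω = t} := by
    intro b hb; ext ω
    simp only [Set.mem_setOf_eq, Set.mem_iUnion, Finset.mem_Icc, exists_prop]
    rw [hK ω, auxDiv n hn (T ω) b hb]
    constructor
    · rintro ⟨h1, h2⟩; exact ⟨T ω, ⟨h1, h2⟩, rfl⟩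
    · rintro ⟨t, ⟨h1, h2⟩, rfl⟩; exact ⟨h1, h2⟩
  have hnb : ∀ b : ℕ, 1 ≤ b → n * b = n*(b-1) + n := by
    intro b hb
    obtain ⟨c, rfl⟩ : ∃ c, b = c + 1 := ⟨b - 1, by omega⟩
    simp only [Nat.add_sub_cancel]; ring
  have hIcc : ∀ (g : ℕ → ℝ) (b : ℕ), 1 ≤ b →
      ∑ t ∈ Finset.Icc (n*(b-1)+1) (n*b), g t
        = ∑ k ∈ Finset.range n, g (n*(b-1)+1+k) := by
    intro g b hb
    rw [hnb b hb, ← Finset.Ico_add_one_right_eq_Icc, Finset.sum_Ico_eq_sum_range]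
    congr 2
    omega
  -- measure of the event
  have hPE : ∀ b : ℕ, 1 ≤ b →
      (P {ω | K ω = b}).toReal = q^(n*(b-1)) * (1 - q^n) := by
    intro b hb
    rw [hEset b hb, measure_biUnion_finset (hdisj _) (fun t _ => hA t),
      ENNReal.toReal_sum (fun t _ => measure_ne_top P _)]
    have h1 : ∀ t ∈ Finset.Icc (n*(b-1)+1) (n*b),
        (P {ω | T ω = t}).toReal = p * q^(t-1) := by
      intro t ht
      rw [Finset.mem_Icc] at ht
      exact hTdist t (by omega)
    rw [Finset.sum_congr rfl h1, hIcc (fun t => p * q^(t-1)) b hb]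
    have h2 : ∀ k ∈ Finset.range n,
        p * q^(n*(b-1)+1+k-1) = (p * q^(n*(b-1))) * q^k := by
      intro k _
      rw [show n*(b-1)+1+k-1 = n*(b-1)+k from by omega, pow_add]; ring
    rw [Finset.sum_congr rfl h2, ← Finset.mul_sum, auxGeom p q hpq hp n]
    field_simp
  -- integral over the event
  have hIE : ∀ b : ℕ, 1 ≤ b →
      ∫ ω in {ω | K ω = b}, F ω ∂P = q^(n*(b-1)) * ((1 - q^n) * l) := by
    intro b hb
    rw [hEset b hb,
      integral_biUnion_finset _ (fun t _ => hA t) (hdisj _) (fun t _ => hFint.integrableOn)]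
    have hconst : ∀ t ∈ Finset.Icc (n*(b-1)+1) (n*b),
        ∫ ω in {ω | T ω = t}, F ω ∂P = (((n*b : ℕ):ℝ) - (t:ℝ)) * (p * q^(t-1)) := by
      intro t ht
      rw [Finset.mem_Icc] at ht
      have heq : Set.EqOn F (fun _ => (((n*b : ℕ):ℝ) - (t:ℝ))) {ω | T ω = t} := by
        intro ω hω
        have hTw : T ω = t := hω
        have hKw : K ω = b := by
          rw [hK ω, hTw, auxDiv n hn t b hb]; exact ht
        simp only [hFdef, hKw, hTw]
      rw [setIntegral_congr_fun (hA t) heq, setIntegral_const,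
        measureReal_def, hTdist t (by omega), smul_eq_mul]
      ring
    rw [Finset.sum_congr rfl hconst,
      hIcc (fun t => (((n*b : ℕ):ℝ) - (t:ℝ)) * (p * q^(t-1))) b hb]
    have hc : ∀ k ∈ Finset.range n,
        (((n*b : ℕ):ℝ) - ((n*(b-1)+1+k : ℕ):ℝ)) * (p * q^(n*(b-1)+1+k-1))
          = (p * q^(n*(b-1))) * (((n:ℝ)-1-k) * q^k) := by
      intro k _
      rw [show n*(b-1)+1+k-1 = n*(b-1)+k from by omega, pow_add, hnb b hb]
      push_cast
      ring
    rw [Finset.sum_congr rfl hc, ← Finset.mul_sum, auxG p q hpq hp n, hldef]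
    field_simp
    ring
  have hPEpos : ∀ b : ℕ, 1 ≤ b → (0:ℝ) < q^(n*(b-1)) * (1 - q^n) := by
    intro b hb
    exact mul_pos (pow_pos hq0 _) h1Q
  constructor
  · -- conditional part
    intro b hb
    show ∫ ω, F ω ∂(P[|{ω | K ω = b}]) = l
    rw [ProbabilityTheory.cond, integral_smul_measure, ENNReal.toReal_inv, smul_eq_mul]
    have : ∫ ω in {ω | K ω = b}, F ω ∂P = q^(n*(b-1)) * ((1 - q^n) * l) := hIE b hb
    rw [this, hPE b hb]
    have h := hPEpos b hb
    field_simp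
  · -- unconditional part
    show ∫ ω, F ω ∂P = l
    have hE0 : ∀ ω, K ω = 0 → F ω = 0 := by
      intro ω h
      have h1 : T ω ≤ n * K ω := (hTK ω).1
      rw [h, Nat.mul_zero] at h1
      have h2 : T ω = 0 := Nat.le_zero.mp h1
      simp [hFdef, h, h2]
    have hIE0 : ∫ ω in {ω | K ω = 0}, F ω ∂P = 0 := by
      rw [setIntegral_congr_fun (hE 0) (fun ω hω => hE0 ω hω)]
      simp
    have hUnion : (⋃ b : ℕ, {ω | K ω = b}) = Set.univ := by
      ext ω; simp only [Set.mem_iUnion, Set.mem_setOf_eq, Set.mem_univ, iff_true]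
      exact ⟨K ω, rfl⟩
    have hKdisj : Pairwise (Function.onFun Disjoint (fun b : ℕ => {ω | K ω = b})) := by
      intro i j hij
      rw [Function.onFun, Set.disjoint_left]
      rintro ω (rfl : K ω = i) (h2 : K ω = j)
      exact hij h2
    have hsplit : ∫ ω, F ω ∂P = ∑' b : ℕ, ∫ ω in {ω | K ω = b}, F ω ∂P := by
      rw [← setIntegral_univ, ← hUnion,
        integral_iUnion hE hKdisj (by rw [hUnion]; exact hFint.integrableOn)]
    have hterm : ∀ b : ℕ, ∫ ω in {ω | K ω = b}, F ω ∂P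
        = (if b = 0 then 0 else (q^n)^(b-1) * ((1-q^n)*l)) := by
      intro b
      rcases Nat.eq_zero_or_pos b with rfl | hb
      · simpa using hIE0
      · rw [hIE b hb, if_neg (by omega), ← pow_mul]
    have hd : (fun b : ℕ => (if b + 1 = 0 then (0:ℝ) else (q^n)^(b+1-1) * ((1-q^n)*l)))
        = fun b : ℕ => (q^n)^b * ((1-q^n)*l) := by
      funext b; simp
    have hsumd : Summable (fun b : ℕ => (q^n)^b * ((1-q^n)*l)) :=
      (summable_geometric_of_lt_one hQ0.le hQ1).mul_right _
    have hsumc : Summable (fun b : ℕ => (if b = 0 then (0:ℝ) else (q^n)^(b-1) * ((1-q^n)*l))) := by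
      apply (summable_nat_add_iff 1).mp
      rw [hd]; exact hsumd
    rw [hsplit, tsum_congr hterm, hsumc.tsum_eq_zero_add]
    simp only [if_pos rfl, zero_add, if_true]
    rw [hd, tsum_mul_right, tsum_geometric_of_lt_one hQ0.le hQ1]
    field_simp
end

section
/- Let (X, 𝒜, μ) be a measure space, let φ₀, φ₁, φ₂ : X → [0,∞) be measurable functions with ∫φᵢ dμ = 1 for i=0,1,2, and let 0 < q < 1. Let f : [0,1] → ℝ be concave. For y ∈ [0,1], define φ_y(x) = y·φ₂(x) + (1-y)q·φ₁(x) + (1-y)(1-q)·φ₀(x), and define h(y) = ∫_X f( (y·φ₂(x) + (1-y)q·φ₁(x)) / φ_y(x) )·φ_y(x) dμ(x), where the integrand is taken to be 0 at points x with φ_y(x)=0. Then h is concave on [0,1]. -/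
open MeasureTheory

/-- A concave function on `[0,1]` is bounded in absolute value. -/
lemma concave_abs_bound (f : ℝ → ℝ) (hf : ConcaveOn ℝ (Set.Icc (0:ℝ) 1) f) :
    ∀ t ∈ Set.Icc (0:ℝ) 1, |f t| ≤ |f 0| + |f 1| + 2 * |f (1/2)| := by
  have h0 : (0:ℝ) ∈ Set.Icc (0:ℝ) 1 := by norm_num
  have h1 : (1:ℝ) ∈ Set.Icc (0:ℝ) 1 := by norm_num
  have lower : ∀ t ∈ Set.Icc (0:ℝ) 1, (1 - t) * f 0 + t * f 1 ≤ f t := by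
    intro t ht
    have := hf.2 h0 h1 (by linarith [ht.2] : (0:ℝ) ≤ 1 - t) ht.1 (by ring)
    simpa using this
  intro t ht
  have hl := lower t ht
  have ht' : 1 - t ∈ Set.Icc (0:ℝ) 1 := ⟨by linarith [ht.2], by linarith [ht.1]⟩
  have hl' := lower (1 - t) ht'
  have hu := hf.2 ht ht' (by norm_num : (0:ℝ) ≤ 1/2) (by norm_num : (0:ℝ) ≤ 1/2)
    (by norm_num)
  simp only [smul_eq_mul] at hu
  have harg : 1/2 * t + 1/2 * (1 - t) = (1:ℝ)/2 := by ring
  rw [harg] at hu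
  rw [abs_le]
  constructor
  · nlinarith [neg_abs_le (f 0), neg_abs_le (f 1), le_abs_self (f 0), le_abs_self (f 1),
      abs_nonneg (f (1/2)), ht.1, ht.2,
      mul_nonneg (by linarith [ht.2] : (0:ℝ) ≤ 1 - t) (by linarith [neg_abs_le (f 0)] : 0 ≤ f 0 + |f 0|),
      mul_nonneg ht.1 (by linarith [neg_abs_le (f 1)] : 0 ≤ f 1 + |f 1|)]
  · nlinarith [neg_abs_le (f 0), neg_abs_le (f 1), le_abs_self (f (1/2)),
      abs_nonneg (f 0), abs_nonneg (f 1),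
      mul_nonneg (by linarith [ht.2] : (0:ℝ) ≤ 1 - t) (abs_nonneg (f 0)),
      mul_nonneg ht.1 (abs_nonneg (f 1)),
      mul_nonneg (by linarith [ht.2] : (0:ℝ) ≤ 1 - t) (abs_nonneg (f 1)),
      mul_nonneg ht.1 (abs_nonneg (f 0)),
      mul_nonneg (by linarith [ht.2] : (0:ℝ) ≤ 1 - t) (by linarith [neg_abs_le (f 0)] : 0 ≤ f 0 + |f 0|),
      mul_nonneg ht.1 (by linarith [neg_abs_le (f 1)] : 0 ≤ f 1 + |f 1|),
      mul_nonneg ht.1 (by linarith [neg_abs_le (f 0)] : 0 ≤ f 0 + |f 0|),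
      mul_nonneg (by linarith [ht.2] : (0:ℝ) ≤ 1 - t) (by linarith [neg_abs_le (f 1)] : 0 ≤ f 1 + |f 1|)]

/-- `a / s ∈ [0,1]` whenever `0 ≤ a ≤ s` (also when `s = 0`, since then `a = 0`
and division by zero gives `0`). -/
lemma ratio_mem_Icc {a s : ℝ} (ha : 0 ≤ a) (has : a ≤ s) :
    a / s ∈ Set.Icc (0:ℝ) 1 := by
  rcases eq_or_lt_of_le (ha.trans has) with h | h
  · have : a = 0 := le_antisymm (has.trans h.symm.le) ha
    simp [this, ← h]
  · exact ⟨div_nonneg ha h.le, (div_le_one h).2 has⟩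

/-- Perspective superadditivity for a concave function. -/
lemma perspective_superadd (f : ℝ → ℝ) (hf : ConcaveOn ℝ (Set.Icc (0:ℝ) 1) f)
    {a₁ s₁ a₂ s₂ : ℝ} (ha₁ : 0 ≤ a₁) (hs₁ : a₁ ≤ s₁) (ha₂ : 0 ≤ a₂) (hs₂ : a₂ ≤ s₂) :
    f (a₁ / s₁) * s₁ + f (a₂ / s₂) * s₂ ≤ f ((a₁ + a₂) / (s₁ + s₂)) * (s₁ + s₂) := by
  rcases eq_or_lt_of_le (ha₁.trans hs₁) with h₁ | h₁
  · have : a₁ = 0 := le_antisymm (hs₁.trans h₁.symm.le) ha₁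
    subst this
    rw [← h₁]
    simp
  rcases eq_or_lt_of_le (ha₂.trans hs₂) with h₂ | h₂
  · have : a₂ = 0 := le_antisymm (hs₂.trans h₂.symm.le) ha₂
    subst this
    rw [← h₂]
    simp
  have hs : (0:ℝ) < s₁ + s₂ := by linarith
  have hm₁ : a₁ / s₁ ∈ Set.Icc (0:ℝ) 1 := ⟨div_nonneg ha₁ h₁.le, (div_le_one h₁).2 hs₁⟩
  have hm₂ : a₂ / s₂ ∈ Set.Icc (0:ℝ) 1 := ⟨div_nonneg ha₂ h₂.le, (div_le_one h₂).2 hs₂⟩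
  have h := hf.2 hm₁ hm₂ (le_of_lt (div_pos h₁ hs)) (le_of_lt (div_pos h₂ hs))
    (by field_simp)
  simp only [smul_eq_mul] at h
  have harg : s₁ / (s₁ + s₂) * (a₁ / s₁) + s₂ / (s₁ + s₂) * (a₂ / s₂)
      = (a₁ + a₂) / (s₁ + s₂) := by
    field_simp
    try ring
  rw [harg] at h
  have hmul := mul_le_mul_of_nonneg_right h hs.le
  calc f (a₁ / s₁) * s₁ + f (a₂ / s₂) * s₂
      = (s₁ / (s₁ + s₂) * f (a₁ / s₁) + s₂ / (s₁ + s₂) * f (a₂ / s₂)) * (s₁ + s₂) := by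
        field_simp; try ring
    _ ≤ f ((a₁ + a₂) / (s₁ + s₂)) * (s₁ + s₂) := hmul

lemma perspective_scale (f : ℝ → ℝ) {t : ℝ} (a s : ℝ) (ht : 0 ≤ t) :
    f (t * a / (t * s)) * (t * s) = t * (f (a / s) * s) := by
  rcases eq_or_lt_of_le ht with h | h
  · rw [← h]; simp
  · rw [mul_div_mul_left _ _ h.ne']; ring

/-- The clamped version of a function concave on `[0,1]` is measurable. -/
lemma measurable_clamp (f : ℝ → ℝ) (hf : ConcaveOn ℝ (Set.Icc (0:ℝ) 1) f) :
    Measurable (fun t : ℝ => if t ≤ 0 then f 0 else if 1 ≤ t then f 1 else f t) := by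
  set F : ℝ → ℝ := fun t => if t ≤ 0 then f 0 else if 1 ≤ t then f 1 else f t with hF
  have hc : ContinuousOn f (Set.Ioo (0:ℝ) 1) := by
    have := hf.continuousOn_interior
    rwa [interior_Icc] at this
  have hcont : ContinuousOn F ({0, 1} : Set ℝ)ᶜ := by
    intro t ht
    apply ContinuousAt.continuousWithinAt
    simp only [Set.mem_compl_iff, Set.mem_insert_iff, Set.mem_singleton_iff, not_or] at ht
    rcases lt_trichotomy t 0 with h | h | h
    · have hev : F =ᶠ[nhds t] fun _ => f 0 := by
        filter_upwards [Iio_mem_nhds h] with s hs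
        have hs' : s < 0 := Set.mem_Iio.1 hs
        simp [hF, le_of_lt hs']
      exact hev.continuousAt
    · exact absurd h ht.1
    · rcases lt_trichotomy t 1 with h' | h' | h'
      · have hct : ContinuousAt f t := hc.continuousAt (Ioo_mem_nhds h h')
        have hev : f =ᶠ[nhds t] F := by
          filter_upwards [Ioo_mem_nhds h h'] with s hs
          simp [hF, not_le.2 hs.1, not_le.2 hs.2]
        exact hct.congr hev
      · exact absurd h' ht.2
      · have hev : F =ᶠ[nhds t] fun _ => f 1 := by
          filter_upwards [Ioi_mem_nhds h'] with s hs
          have hs' : (1:ℝ) < s := Set.mem_Ioi.1 hs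
          simp [hF, not_le.2 (lt_trans zero_lt_one hs'), le_of_lt hs']
        exact hev.continuousAt
  exact measurable_of_measurable_on_compl_finite ({0, 1} : Set ℝ)
    (Set.toFinite _) (continuousOn_iff_continuous_restrict.1 hcont).measurable

lemma clamp_eq (f : ℝ → ℝ) {t : ℝ} (ht : t ∈ Set.Icc (0:ℝ) 1) :
    (if t ≤ 0 then f 0 else if 1 ≤ t then f 1 else f t) = f t := by
  rcases eq_or_lt_of_le ht.1 with h | h
  · simp [← h]
  · rcases eq_or_lt_of_le ht.2 with h' | h'
    · simp [h', not_le.2 h]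
    · simp [not_le.2 h, not_le.2 h']

/-- Concavity preservation under the Bayesian update (Lemma of Appendix VI):
if `f` is concave on `[0,1]`, `φ₀, φ₁, φ₂` are probability densities on `X`, and
`0 < q < 1`, then `y ↦ ∫ f((y φ₂ + (1-y)q φ₁)/φ_y) · φ_y dμ` is concave on `[0,1]`,
where `φ_y = y φ₂ + (1-y)q φ₁ + (1-y)(1-q) φ₀` (the integrand being `0` where
`φ_y` vanishes; division by zero yields `0` in Lean, so the factor `φ_y` kills
those points). -/
theorem bayes_update_preserves_concavity
    {X : Type*} [MeasurableSpace X] (μ : Measure X)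
    (φ₀ φ₁ φ₂ : X → ℝ)
    (hm₀ : Measurable φ₀) (hm₁ : Measurable φ₁) (hm₂ : Measurable φ₂)
    (hnn₀ : ∀ x, 0 ≤ φ₀ x) (hnn₁ : ∀ x, 0 ≤ φ₁ x) (hnn₂ : ∀ x, 0 ≤ φ₂ x)
    (hi₀ : Integrable φ₀ μ) (hi₁ : Integrable φ₁ μ) (hi₂ : Integrable φ₂ μ)
    (hp₀ : ∫ x, φ₀ x ∂μ = 1) (hp₁ : ∫ x, φ₁ x ∂μ = 1) (hp₂ : ∫ x, φ₂ x ∂μ = 1)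
    (q : ℝ) (hq0 : 0 < q) (hq1 : q < 1)
    (f : ℝ → ℝ) (hf : ConcaveOn ℝ (Set.Icc (0 : ℝ) 1) f) :
    ConcaveOn ℝ (Set.Icc (0 : ℝ) 1) (fun y =>
      ∫ x,
        f ((y * φ₂ x + (1 - y) * q * φ₁ x) /
            (y * φ₂ x + (1 - y) * q * φ₁ x + (1 - y) * (1 - q) * φ₀ x))
          * (y * φ₂ x + (1 - y) * q * φ₁ x + (1 - y) * (1 - q) * φ₀ x) ∂μ) := by
  have hFm : Measurable (fun t : ℝ => if t ≤ 0 then f 0 else if 1 ≤ t then f 1 else f t) :=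
    measurable_clamp f hf
  have hMb := concave_abs_bound f hf
  set M : ℝ := |f 0| + |f 1| + 2 * |f (1/2)| with hMdef
  have hM0 : 0 ≤ M := by positivity
  -- positivity facts about the numerator and denominator
  have hAn : ∀ y ∈ Set.Icc (0:ℝ) 1, ∀ x, 0 ≤ y * φ₂ x + (1 - y) * q * φ₁ x := by
    intro y hy x
    have := hnn₁ x; have := hnn₂ x
    nlinarith [mul_nonneg hy.1 (hnn₂ x),
      mul_nonneg (mul_nonneg (by linarith [hy.2] : (0:ℝ) ≤ 1 - y) hq0.le) (hnn₁ x)]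
  have hASle : ∀ y ∈ Set.Icc (0:ℝ) 1, ∀ x,
      y * φ₂ x + (1 - y) * q * φ₁ x
        ≤ y * φ₂ x + (1 - y) * q * φ₁ x + (1 - y) * (1 - q) * φ₀ x := by
    intro y hy x
    nlinarith [mul_nonneg (mul_nonneg (by linarith [hy.2] : (0:ℝ) ≤ 1 - y)
      (by linarith : (0:ℝ) ≤ 1 - q)) (hnn₀ x)]
  -- integrability of the integrand for every y in [0,1]
  have hint : ∀ y ∈ Set.Icc (0:ℝ) 1, Integrable (fun x =>
      f ((y * φ₂ x + (1 - y) * q * φ₁ x) /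
          (y * φ₂ x + (1 - y) * q * φ₁ x + (1 - y) * (1 - q) * φ₀ x))
        * (y * φ₂ x + (1 - y) * q * φ₁ x + (1 - y) * (1 - q) * φ₀ x)) μ := by
    intro y hy
    have hmeasA : Measurable (fun x => y * φ₂ x + (1 - y) * q * φ₁ x) :=
      (hm₂.const_mul y).add (hm₁.const_mul ((1 - y) * q))
    have hmeasS : Measurable (fun x =>
        y * φ₂ x + (1 - y) * q * φ₁ x + (1 - y) * (1 - q) * φ₀ x) :=
      hmeasA.add (hm₀.const_mul ((1 - y) * (1 - q)))
    have hr : Measurable (fun x => (y * φ₂ x + (1 - y) * q * φ₁ x) /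
        (y * φ₂ x + (1 - y) * q * φ₁ x + (1 - y) * (1 - q) * φ₀ x)) :=
      hmeasA.div hmeasS
    have hrI : ∀ x, (y * φ₂ x + (1 - y) * q * φ₁ x) /
        (y * φ₂ x + (1 - y) * q * φ₁ x + (1 - y) * (1 - q) * φ₀ x) ∈ Set.Icc (0:ℝ) 1 :=
      fun x => ratio_mem_Icc (hAn y hy x) (hASle y hy x)
    have heq : (fun x =>
        f ((y * φ₂ x + (1 - y) * q * φ₁ x) /
            (y * φ₂ x + (1 - y) * q * φ₁ x + (1 - y) * (1 - q) * φ₀ x))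
          * (y * φ₂ x + (1 - y) * q * φ₁ x + (1 - y) * (1 - q) * φ₀ x))
        = (fun x =>
        (fun t : ℝ => if t ≤ 0 then f 0 else if 1 ≤ t then f 1 else f t)
          ((y * φ₂ x + (1 - y) * q * φ₁ x) /
            (y * φ₂ x + (1 - y) * q * φ₁ x + (1 - y) * (1 - q) * φ₀ x))
          * (y * φ₂ x + (1 - y) * q * φ₁ x + (1 - y) * (1 - q) * φ₀ x)) := by
      funext x
      beta_reduce
      rw [clamp_eq f (hrI x)]
    rw [heq]
    refine Integrable.mono (g := fun x => M * (φ₀ x + φ₁ x + φ₂ x))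
      (((hi₀.add hi₁).add hi₂).const_mul M)
      ((hFm.comp hr).mul hmeasS).aestronglyMeasurable ?_
    refine Filter.Eventually.of_forall fun x => ?_
    beta_reduce
    rw [clamp_eq f (hrI x)]
    have hS0 : 0 ≤ y * φ₂ x + (1 - y) * q * φ₁ x + (1 - y) * (1 - q) * φ₀ x :=
      (hAn y hy x).trans (hASle y hy x)
    have hSle : y * φ₂ x + (1 - y) * q * φ₁ x + (1 - y) * (1 - q) * φ₀ x
        ≤ φ₀ x + φ₁ x + φ₂ x := by
      nlinarith [mul_nonneg (by linarith [hy.2] : (0:ℝ) ≤ 1 - y) (hnn₂ x),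
        mul_nonneg (by linarith [hy.2] : (0:ℝ) ≤ 1 - y) (hnn₁ x),
        mul_nonneg hy.1 (hnn₁ x), hnn₁ x,
        mul_nonneg (mul_nonneg (by linarith [hy.2] : (0:ℝ) ≤ 1 - y) hq0.le) (hnn₁ x),
        mul_nonneg (by linarith [hy.2] : (0:ℝ) ≤ 1 - y) (hnn₀ x),
        mul_nonneg (mul_nonneg (by linarith [hy.2] : (0:ℝ) ≤ 1 - y)
          (by linarith : (0:ℝ) ≤ 1 - q)) (hnn₀ x), hnn₀ x,
        mul_nonneg hy.1 (hnn₀ x)]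
    have hfb := hMb _ (hrI x)
    rw [Real.norm_eq_abs, Real.norm_eq_abs, abs_mul,
      abs_of_nonneg hS0]
    refine le_trans (mul_le_mul hfb hSle hS0 hM0) (le_abs_self _)
  -- the concavity argument
  refine ⟨convex_Icc 0 1, fun y₁ hy₁ y₂ hy₂ t u ht hu htu => ?_⟩
  have hyc : t * y₁ + u * y₂ ∈ Set.Icc (0:ℝ) 1 := by
    have := (convex_Icc (0:ℝ) 1) hy₁ hy₂ ht hu htu
    simpa [smul_eq_mul] using this
  simp only [smul_eq_mul]
  rw [← integral_const_mul, ← integral_const_mul,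
    ← integral_add ((hint y₁ hy₁).const_mul t) ((hint y₂ hy₂).const_mul u)]
  refine integral_mono
    (((hint y₁ hy₁).const_mul t).add ((hint y₂ hy₂).const_mul u))
    (hint _ hyc) fun x => ?_
  have hu' : u = 1 - t := by linarith
  subst hu'
  have k := perspective_superadd f hf
    (mul_nonneg ht (hAn y₁ hy₁ x))
    (mul_le_mul_of_nonneg_left (hASle y₁ hy₁ x) ht)
    (mul_nonneg (by linarith : (0:ℝ) ≤ 1 - t) (hAn y₂ hy₂ x))
    (mul_le_mul_of_nonneg_left (hASle y₂ hy₂ x) (by linarith : (0:ℝ) ≤ 1 - t))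
  rw [perspective_scale f _ _ ht, perspective_scale f _ _ (by linarith : (0:ℝ) ≤ 1 - t)] at k
  have e1 : t * (y₁ * φ₂ x + (1 - y₁) * q * φ₁ x)
      + (1 - t) * (y₂ * φ₂ x + (1 - y₂) * q * φ₁ x)
      = (t * y₁ + (1 - t) * y₂) * φ₂ x + (1 - (t * y₁ + (1 - t) * y₂)) * q * φ₁ x := by
    ring
  have e2 : t * (y₁ * φ₂ x + (1 - y₁) * q * φ₁ x + (1 - y₁) * (1 - q) * φ₀ x)
      + (1 - t) * (y₂ * φ₂ x + (1 - y₂) * q * φ₁ x + (1 - y₂) * (1 - q) * φ₀ x)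
      = (t * y₁ + (1 - t) * y₂) * φ₂ x + (1 - (t * y₁ + (1 - t) * y₂)) * q * φ₁ x
        + (1 - (t * y₁ + (1 - t) * y₂)) * (1 - q) * φ₀ x := by
    ring
  rw [e1, e2] at k
  exact k
end
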